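/- arXiv:2009.13814 — 5 statements merged into one kernel-verified Lean document; each statement's English description precedes it below -/
import Mathlib

section
/- Let f be a measurable function on ℝⁿ, Q a cube, and m_f(Q) a median value of f on Q, i.e., a real number such that both |{x ∈ Q : f(x) > m_f(Q)}| ≤ |Q|/2 and |{x ∈ Q : f(x) < m_f(Q)}| ≤ |Q|/2. Then |m_f(Q)| ≤ (f·1_Q)*(|Q|/2), where (f·1_Q)* denotes the decreasing rearrangement of f·1_Q. -/
open MeasureTheory Set Filter

noncomputable section

/-- `Q ⊆ ℝⁿ` is a cube (axis-parallel, with positive side length). -/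
def IsCube {n : ℕ} (Q : Set (Fin n → ℝ)) : Prop :=
  ∃ (a : Fin n → ℝ) (h : ℝ), 0 < h ∧ Q = Set.univ.pi fun i => Set.Ico (a i) (a i + h)

/-- The decreasing rearrangement
`g*(t) = inf {α > 0 : |{x : |g(x)| > α}| < t}`. -/
def decRearr {n : ℕ} (g : (Fin n → ℝ) → ℝ) (t : ℝ) : ℝ :=
  sInf {α : ℝ | 0 < α ∧ volume {x | α < |g x|} < ENNReal.ofReal t}

/-- A median value of `f` on a cube `Q` is bounded by `(f·1_Q)*(|Q|/2)`. -/
theorem abs_median_le_decRearr {n : ℕ} (f : (Fin n → ℝ) → ℝ) (hf : Measurable f)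
    (Q : Set (Fin n → ℝ)) (hQ : IsCube Q) (med : ℝ)
    (h₁ : volume {x ∈ Q | med < f x} ≤ volume Q / 2)
    (h₂ : volume {x ∈ Q | f x < med} ≤ volume Q / 2) :
    |med| ≤ decRearr (Q.indicator f) ((volume Q).toReal / 2) := by
  obtain ⟨a, h, hh, hQeq⟩ := hQ
  have hQm : MeasurableSet Q := by
    rw [hQeq]; exact MeasurableSet.univ_pi fun i => measurableSet_Ico
  have hQvol : volume Q = ENNReal.ofReal h ^ n := by
    rw [hQeq, volume_pi_pi]
    simp [Real.volume_Ico]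
  have hQ0 : volume Q ≠ 0 := by
    rw [hQvol]
    exact pow_ne_zero n (ENNReal.ofReal_pos.mpr hh).ne'
  have hQtop : volume Q ≠ ⊤ := by
    rw [hQvol]; exact ENNReal.pow_ne_top ENNReal.ofReal_ne_top
  set g := Q.indicator f with hgdef
  have hg : Measurable g := hf.indicator hQm
  have hhalf : 0 < volume Q / 2 := ENNReal.div_pos hQ0 ENNReal.ofNat_ne_top
  have hofReal : ENNReal.ofReal ((volume Q).toReal / 2) = volume Q / 2 := by
    rw [ENNReal.ofReal_div_of_pos two_pos, ENNReal.ofReal_toReal hQtop]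
    norm_num
  have key : ∀ A B : Set (Fin n → ℝ), Q ⊆ A ∪ B → volume A ≤ volume Q / 2 →
      volume Q / 2 ≤ volume B := by
    intro A B hsub hA
    have h1 : volume Q ≤ volume A + volume B :=
      (measure_mono hsub).trans (measure_union_le _ _)
    have h2 : volume Q - volume A ≤ volume B := tsub_le_iff_left.mpr h1
    calc volume Q / 2 = volume Q - volume Q / 2 := (ENNReal.sub_half hQtop).symm
      _ ≤ volume Q - volume A := tsub_le_tsub_left hA _
      _ ≤ volume B := h2
  -- nonemptiness of the set
  have hne : ∃ α : ℝ, 0 < α ∧ volume {x | α < |g x|} < ENNReal.ofReal ((volume Q).toReal / 2) := by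
    set A : ℕ → Set (Fin n → ℝ) := fun k => {x | (k : ℝ) + 1 < |g x|} with hAdef
    have hAm : ∀ k, NullMeasurableSet (A k) volume := fun k =>
      (measurableSet_lt measurable_const hg.abs).nullMeasurableSet
    have hAmono : Antitone A := by
      intro k m hkm x hx
      have : (k : ℝ) + 1 ≤ (m : ℝ) + 1 := by
        have := (Nat.cast_le (α := ℝ)).mpr hkm
        linarith
      exact lt_of_le_of_lt this hx
    have hAsub : ∀ k, A k ⊆ Q := by
      intro k x hx
      by_contra hxQ
      have : g x = 0 := Set.indicator_of_notMem hxQ f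
      simp only [hAdef, Set.mem_setOf_eq, this, abs_zero] at hx
      have : (0:ℝ) ≤ (k:ℝ) := Nat.cast_nonneg k
      linarith
    have hAint : ⋂ k, A k = ∅ := by
      ext x
      simp only [Set.mem_iInter, Set.mem_empty_iff_false, iff_false, not_forall]
      obtain ⟨k, hk⟩ := exists_nat_gt (|g x|)
      exact ⟨k, by simp only [hAdef, Set.mem_setOf_eq, not_lt]; linarith⟩
    have hfin : ∃ k, volume (A k) ≠ ⊤ := ⟨0, ((measure_mono (hAsub 0)).trans_lt hQtop.lt_top).ne⟩
    have htend : Tendsto (fun k => volume (A k)) atTop (nhds 0) := by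
      have := tendsto_measure_iInter_atTop hAm hAmono hfin
      rwa [hAint, measure_empty] at this
    have hev : ∀ᶠ k in atTop, volume (A k) < volume Q / 2 :=
      htend.eventually_lt_const hhalf
    obtain ⟨k, hk⟩ := hev.exists
    refine ⟨(k : ℝ) + 1, by positivity, ?_⟩
    rw [hofReal]
    exact hk
  apply le_csInf hne
  rintro b ⟨hb0, hbvol⟩
  rw [hofReal] at hbvol
  by_contra hlt
  push_neg at hlt
  rcases lt_abs.mp hlt with hb | hb
  · -- b < med
    have hsub : {x ∈ Q | med ≤ f x} ⊆ {x | b < |g x|} := by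
      intro x ⟨hxQ, hxf⟩
      have hgx : g x = f x := Set.indicator_of_mem hxQ f
      simp only [Set.mem_setOf_eq, hgx]
      have : b < f x := lt_of_lt_of_le hb hxf
      exact lt_of_lt_of_le this (le_abs_self _)
    have hcover : Q ⊆ {x ∈ Q | f x < med} ∪ {x ∈ Q | med ≤ f x} := by
      intro x hx
      rcases lt_or_ge (f x) med with h' | h'
      · exact Or.inl ⟨hx, h'⟩
      · exact Or.inr ⟨hx, h'⟩
    have := (key _ _ hcover h₂).trans (measure_mono hsub)
    exact absurd (this.trans_lt hbvol) (lt_irrefl _)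
  · -- b < -med
    have hsub : {x ∈ Q | f x ≤ med} ⊆ {x | b < |g x|} := by
      intro x ⟨hxQ, hxf⟩
      have hgx : g x = f x := Set.indicator_of_mem hxQ f
      simp only [Set.mem_setOf_eq, hgx]
      have : b < -f x := by linarith
      exact lt_of_lt_of_le this (neg_le_abs _)
    have hcover : Q ⊆ {x ∈ Q | med < f x} ∪ {x ∈ Q | f x ≤ med} := by
      intro x hx
      rcases lt_or_ge med (f x) with h' | h'
      · exact Or.inl ⟨hx, h'⟩
      · exact Or.inr ⟨hx, h'⟩
    have := (key _ _ hcover h₁).trans (measure_mono hsub)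
    exact absurd (this.trans_lt hbvol) (lt_irrefl _)

end
end

section
/- Let β₁,…,β_m ≥ 0 with β := ∑_{i=1}^m β_i < 1, and let 𝒮 be an η-sparse family of dyadic cubes (0 < η < 1). Then for every cube Q ∈ 𝒮 and all weights w₁,…,w_m, ∑_{Q' ∈ 𝒮, Q' ⊆ Q} |Q'| ∏_{i=1}^m ⟨w_i⟩_{Q'}^{β_i} ≤ C(η, β, n) |Q| ∏_{i=1}^m ⟨w_i⟩_Q^{β_i}, where ⟨w⟩_Q = (1/|Q|)∫_Q w dx. -/
open MeasureTheory Set Filter ENNReal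

noncomputable section

/-- A dyadic grid: a countable family of cubes, any two of which are nested or disjoint. -/
def IsDyadicGrid {n : ℕ} (𝒟 : Set (Set (Fin n → ℝ))) : Prop :=
  (∀ Q ∈ 𝒟, IsCube Q) ∧
  (∀ Q ∈ 𝒟, ∀ Q' ∈ 𝒟, Q ⊆ Q' ∨ Q' ⊆ Q ∨ Q ∩ Q' = ∅) ∧ 𝒟.Countable

/-- `𝒮` is `η`-sparse: each `Q ∈ 𝒮` contains a measurable portion `E_Q` of measure at least
`η|Q|`, the portions being pairwise disjoint. -/
def IsSparse {n : ℕ} (η : ℝ) (𝒮 : Set (Set (Fin n → ℝ))) : Prop :=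
  ∃ E : Set (Fin n → ℝ) → Set (Fin n → ℝ),
    (∀ Q ∈ 𝒮, E Q ⊆ Q ∧ MeasurableSet (E Q) ∧ ENNReal.ofReal η * volume Q ≤ volume (E Q)) ∧
    𝒮.Pairwise fun Q Q' => Disjoint (E Q) (E Q')

/-- The average `⟨w⟩_Q = (1/|Q|) ∫_Q w`. -/
def lavg {n : ℕ} (w : (Fin n → ℝ) → ℝ≥0∞) (Q : Set (Fin n → ℝ)) : ℝ≥0∞ :=
  (∫⁻ x in Q, w x) / volume Q

namespace SparseAux

lemma isCube_measurableSet {n : ℕ} {Q : Set (Fin n → ℝ)} (h : IsCube Q) : MeasurableSet Q := by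
  obtain ⟨a, h, hh, rfl⟩ := h
  exact MeasurableSet.univ_pi fun i => measurableSet_Ico

lemma isCube_volume {n : ℕ} {Q : Set (Fin n → ℝ)} (h : IsCube Q) :
    volume Q ≠ 0 ∧ volume Q ≠ ⊤ := by
  obtain ⟨a, h, hh, rfl⟩ := h
  rw [volume_pi_pi]
  simp only [Real.volume_Ico, add_sub_cancel_left]
  constructor
  · exact Finset.prod_ne_zero_iff.2 fun i _ => (ENNReal.ofReal_pos.2 hh).ne'
  · exact (ENNReal.prod_lt_top fun i _ => ENNReal.ofReal_lt_top).ne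

lemma prod_rpow_const {ι : Type*} (s : Finset ι) (β : ι → ℝ) (x : ℝ≥0∞)
    (hx : x ≠ 0) (hx' : x ≠ ⊤) :
    ∏ i ∈ s, x ^ β i = x ^ (∑ i ∈ s, β i) := by
  classical
  induction s using Finset.induction_on with
  | empty => simp
  | insert _ _ hnot ih =>
      rw [Finset.prod_insert hnot, Finset.sum_insert hnot, ENNReal.rpow_add _ _ hx hx', ih]

lemma sparse_tsum {n : ℕ} {η : ℝ} (hη : 0 < η) {𝒮 : Set (Set (Fin n → ℝ))}
    (hS : IsSparse η 𝒮) {𝒞 : Set (Set (Fin n → ℝ))} (hsub : 𝒞 ⊆ 𝒮) (hc : 𝒞.Countable) :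
    ∑' P : 𝒞, volume (P : Set (Fin n → ℝ)) ≤ (ENNReal.ofReal η)⁻¹ * volume (⋃₀ 𝒞) := by
  obtain ⟨E, hE, hdisj⟩ := hS
  have h0 : ENNReal.ofReal η ≠ 0 := (ENNReal.ofReal_pos.2 hη).ne'
  have key : ENNReal.ofReal η * ∑' P : 𝒞, volume (P : Set (Fin n → ℝ)) ≤ volume (⋃₀ 𝒞) := by
    rw [← ENNReal.tsum_mul_left]
    have h1 : ∀ P : 𝒞, ENNReal.ofReal η * volume (P : Set (Fin n → ℝ)) ≤ volume (E P) :=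
      fun P => (hE P (hsub P.2)).2.2
    refine le_trans (ENNReal.tsum_le_tsum h1) ?_
    rw [← measure_biUnion hc (hdisj.mono hsub) (fun P hP => (hE P (hsub hP)).2.1)]
    exact measure_mono
      (iUnion₂_subset fun P hP => (hE P (hsub hP)).1.trans (subset_sUnion_of_mem hP))
  calc ∑' P : 𝒞, volume (P : Set (Fin n → ℝ))
      = (ENNReal.ofReal η)⁻¹ * (ENNReal.ofReal η * ∑' P : 𝒞, volume (P : Set (Fin n → ℝ))) := by
        rw [← mul_assoc, ENNReal.inv_mul_cancel h0 ENNReal.ofReal_ne_top, one_mul]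
    _ ≤ _ := mul_le_mul_right key _

lemma finite_union_bound {n : ℕ} {Q : Set (Fin n → ℝ)} (v : (Fin n → ℝ) → ℝ≥0∞) (κ : ℝ≥0∞)
    (F : Finset (Set (Fin n → ℝ)))
    (hnest : ∀ P ∈ F, ∀ P' ∈ F, P ⊆ P' ∨ P' ⊆ P ∨ P ∩ P' = ∅)
    (hmeas : ∀ P ∈ F, MeasurableSet P)
    (hsub : ∀ P ∈ F, P ⊆ Q)
    (hbound : ∀ P ∈ F, volume P ≤ κ * ∫⁻ x in P, v x) :
    volume (⋃ P ∈ F, P) ≤ κ * ∫⁻ x in Q, v x := by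
  classical
  set M := F.filter (fun P => ∀ P' ∈ F, P ⊆ P' → P = P') with hM
  have hMF : ∀ P ∈ M, P ∈ F := fun P hP => (Finset.mem_filter.1 hP).1
  have hMmax : ∀ P ∈ M, ∀ P' ∈ F, P ⊆ P' → P = P' := fun P hP => (Finset.mem_filter.1 hP).2
  have cover : ∀ P ∈ F, ∃ P' ∈ M, P ⊆ P' := by
    intro P hP
    obtain ⟨P', hP'mem, hmax⟩ := Set.Finite.exists_maximalFor id {P' | P' ∈ F ∧ P ⊆ P'}
      (F.finite_toSet.subset fun x hx => hx.1) ⟨P, hP, subset_rfl⟩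
    refine ⟨P', Finset.mem_filter.2 ⟨hP'mem.1, fun P'' hP'' hsub' => ?_⟩, hP'mem.2⟩
    exact subset_antisymm hsub' (hmax ⟨hP'', hP'mem.2.trans hsub'⟩ hsub')
  have hdisj : (M : Set (Set (Fin n → ℝ))).PairwiseDisjoint id := by
    intro P hP P' hP' hne
    rcases hnest P (hMF P hP) P' (hMF P' hP') with h | h | h
    · exact absurd (hMmax P hP P' (hMF P' hP') h) hne
    · exact absurd (hMmax P' hP' P (hMF P hP) h).symm hne
    · exact Set.disjoint_iff_inter_eq_empty.2 h
  calc volume (⋃ P ∈ F, P) ≤ volume (⋃ P ∈ M, P) := by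
        refine measure_mono (iUnion₂_subset fun P hP => ?_)
        obtain ⟨P', hP', hPP'⟩ := cover P hP
        exact hPP'.trans (subset_iUnion₂_of_subset P' hP' subset_rfl)
    _ ≤ ∑ P ∈ M, volume P := measure_biUnion_finset_le M id
    _ ≤ ∑ P ∈ M, κ * ∫⁻ x in P, v x := Finset.sum_le_sum fun P hP => hbound P (hMF P hP)
    _ = κ * ∑ P ∈ M, ∫⁻ x in P, v x := (Finset.mul_sum _ _ _).symm
    _ = κ * ∫⁻ x in ⋃ P ∈ M, id P, v x := by
        rw [lintegral_biUnion_finset hdisj (fun P hP => hmeas P (hMF P hP)) v]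
        rfl
    _ ≤ κ * ∫⁻ x in Q, v x :=
        mul_le_mul_right
          (lintegral_mono_set (iUnion₂_subset fun P hP => hsub P (hMF P hP))) κ

lemma union_bound {n : ℕ} {Q : Set (Fin n → ℝ)} (v : (Fin n → ℝ) → ℝ≥0∞) (κ : ℝ≥0∞)
    (𝒞 : Set (Set (Fin n → ℝ))) (hc : 𝒞.Countable)
    (hnest : ∀ P ∈ 𝒞, ∀ P' ∈ 𝒞, P ⊆ P' ∨ P' ⊆ P ∨ P ∩ P' = ∅)
    (hmeas : ∀ P ∈ 𝒞, MeasurableSet P)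
    (hsub : ∀ P ∈ 𝒞, P ⊆ Q)
    (hbound : ∀ P ∈ 𝒞, volume P ≤ κ * ∫⁻ x in P, v x) :
    volume (⋃₀ 𝒞) ≤ κ * ∫⁻ x in Q, v x := by
  classical
  rcases 𝒞.eq_empty_or_nonempty with rfl | hne
  · simp
  obtain ⟨e, rfl⟩ := hc.exists_eq_range hne
  have hU : ⋃₀ Set.range e = ⋃ N : ℕ, ⋃ k ∈ Finset.range (N + 1), e k := by
    rw [sUnion_range]
    ext x
    simp only [mem_iUnion, Finset.mem_range]
    exact ⟨fun ⟨k, hk⟩ => ⟨k, k, Nat.lt_succ_self k, hk⟩, fun ⟨N, k, _, hk⟩ => ⟨k, hk⟩⟩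
  rw [hU]
  have hdir : Directed (· ⊆ ·) (fun N : ℕ => ⋃ k ∈ Finset.range (N + 1), e k) := by
    refine (Monotone.directed_le ?_)
    intro N N' hNN'
    exact iUnion₂_subset fun k hk =>
      subset_iUnion₂_of_subset k (Finset.mem_range.2 (lt_of_lt_of_le (Finset.mem_range.1 hk)
        (by omega))) subset_rfl
  rw [Directed.measure_iUnion hdir]
  refine iSup_le fun N => ?_
  have hmem : ∀ k, e k ∈ Set.range e := fun k => ⟨k, rfl⟩
  have := finite_union_bound v κ ((Finset.range (N + 1)).image e)
    (fun P hP P' hP' => by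
      obtain ⟨k, _, rfl⟩ := Finset.mem_image.1 hP
      obtain ⟨k', _, rfl⟩ := Finset.mem_image.1 hP'
      exact hnest _ (hmem k) _ (hmem k'))
    (fun P hP => by
      obtain ⟨k, _, rfl⟩ := Finset.mem_image.1 hP; exact hmeas _ (hmem k))
    (fun P hP => by
      obtain ⟨k, _, rfl⟩ := Finset.mem_image.1 hP; exact hsub _ (hmem k))
    (fun P hP => by
      obtain ⟨k, _, rfl⟩ := Finset.mem_image.1 hP; exact hbound _ (hmem k))
  have hset : (⋃ P ∈ (Finset.range (N + 1)).image e, P) = ⋃ k ∈ Finset.range (N + 1), e k := by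
    ext x; simp
  rw [hset] at this
  exact this

end SparseAux

open SparseAux in
/-- If `β = ∑ βᵢ < 1` and `𝒮` is an `η`-sparse family of dyadic cubes, then for every `Q ∈ 𝒮`
and all weights `wᵢ`,
`∑_{Q' ∈ 𝒮, Q' ⊆ Q} |Q'| ∏ᵢ ⟨wᵢ⟩_{Q'}^{βᵢ} ≤ C(η,β,n) |Q| ∏ᵢ ⟨wᵢ⟩_Q^{βᵢ}`. -/
theorem sparse_sum_avg_le {n m : ℕ} (η : ℝ) (hη : 0 < η) (hη1 : η ≤ 1)
    (β : Fin m → ℝ) (hβ : ∀ i, 0 ≤ β i) (hβsum : ∑ i, β i < 1) :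
    ∃ C : ℝ, 0 < C ∧
      ∀ (𝒮 : Set (Set (Fin n → ℝ))), IsSparse η 𝒮 →
        (∃ 𝒟, IsDyadicGrid 𝒟 ∧ 𝒮 ⊆ 𝒟) →
        ∀ Q ∈ 𝒮, ∀ w : Fin m → (Fin n → ℝ) → ℝ≥0∞, (∀ i, Measurable (w i)) →
          (∑' Q' : {Q' // Q' ∈ 𝒮 ∧ Q' ⊆ Q},
              volume (Q' : Set (Fin n → ℝ)) * ∏ i, lavg (w i) Q'.1 ^ β i)
            ≤ ENNReal.ofReal C * volume Q * ∏ i, lavg (w i) Q ^ β i := by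
  classical
  set b : ℝ := ∑ i, β i with hb
  have hb0 : 0 ≤ b := Finset.sum_nonneg fun i _ => hβ i
  set b' : ℝ := (b + 1) / 2 with hb'
  have hb'pos : 0 < b' := by rw [hb']; linarith
  have hbb' : b < b' := by rw [hb']; linarith
  have hb'1 : b' < 1 := by rw [hb']; linarith
  have h2top : (2 : ℝ≥0∞) ≠ ⊤ := by norm_num
  have h2zero : (2 : ℝ≥0∞) ≠ 0 := by norm_num
  have h1lt2 : (1 : ℝ≥0∞) < 2 := by norm_num
  set r : ℝ≥0∞ := (2 : ℝ≥0∞) ^ ((1 : ℝ) - 1 / b') with hr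
  have hr1 : r < 1 := by
    have hexp : (1 : ℝ) - 1 / b' < 0 := by
      have : 1 < 1 / b' := (one_lt_div hb'pos).2 hb'1
      linarith
    calc r < (2 : ℝ≥0∞) ^ (0 : ℝ) :=
          ENNReal.rpow_lt_rpow_of_exponent_lt h1lt2 h2top hexp
      _ = 1 := ENNReal.rpow_zero
  have hηpos : ENNReal.ofReal η ≠ 0 := (ENNReal.ofReal_pos.2 hη).ne'
  have hgeom_ne_top : (1 - r)⁻¹ ≠ ⊤ := ENNReal.inv_ne_top.2 (tsub_pos_of_lt hr1).ne'
  set D : ℝ≥0∞ := (ENNReal.ofReal η)⁻¹ * (2 + (m : ℝ≥0∞) * (4 * (1 - r)⁻¹)) with hD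
  have hD_ne_top : D ≠ ⊤ := by
    refine ENNReal.mul_ne_top (ENNReal.inv_ne_top.2 hηpos) ?_
    exact ENNReal.add_ne_top.2 ⟨by norm_num,
      ENNReal.mul_ne_top (ENNReal.natCast_ne_top m)
        (ENNReal.mul_ne_top (by norm_num) hgeom_ne_top)⟩
  have hD_ne_zero : D ≠ 0 := by
    refine mul_ne_zero (ENNReal.inv_ne_zero.2 ENNReal.ofReal_ne_top) ?_
    intro h
    have : (2 : ℝ≥0∞) ≤ 0 := h ▸ le_add_right le_rfl
    simp at this
  refine ⟨D.toReal, ENNReal.toReal_pos hD_ne_zero hD_ne_top, ?_⟩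
  intro 𝒮 hSp hGrid Q hQ w hw
  obtain ⟨𝒟, ⟨hcube, hnest, hcount⟩, hSD⟩ := hGrid
  rw [ENNReal.ofReal_toReal hD_ne_top]
  have hQvol := isCube_volume (hcube Q (hSD hQ))
  -- Case: some average vanishes
  by_cases hz : ∃ i, β i ≠ 0 ∧ lavg (w i) Q = 0
  · obtain ⟨i, hiβ, hAi⟩ := hz
    have hint : ∫⁻ x in Q, w i x = 0 := by
      rcases ENNReal.div_eq_zero_iff.1 hAi with h | h
      · exact h
      · exact absurd h hQvol.2
    have hzero : ∀ P : {Q' // Q' ∈ 𝒮 ∧ Q' ⊆ Q},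
        volume (P : Set (Fin n → ℝ)) * ∏ j, lavg (w j) P.1 ^ β j = 0 := by
      intro P
      have h1 : lavg (w i) P.1 = 0 := by
        have hle : ∫⁻ x in P.1, w i x ≤ 0 := hint ▸ lintegral_mono_set P.2.2
        simp [lavg, le_antisymm hle zero_le]
      have h2 : lavg (w i) P.1 ^ β i = 0 := by
        rw [h1]; exact ENNReal.zero_rpow_of_pos (lt_of_le_of_ne (hβ i) (Ne.symm hiβ))
      rw [Finset.prod_eq_zero (Finset.mem_univ i) h2, mul_zero]
    rw [tsum_congr hzero, tsum_zero]
    exact zero_le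
  push_neg at hz
  -- Case: some average is infinite
  by_cases ht : ∃ i, β i ≠ 0 ∧ lavg (w i) Q = ⊤
  · obtain ⟨j, hjβ, hAj⟩ := ht
    have hprod : ∏ i, lavg (w i) Q ^ β i = ⊤ := by
      rw [← Finset.mul_prod_erase Finset.univ _ (Finset.mem_univ j), hAj,
        ENNReal.top_rpow_of_pos (lt_of_le_of_ne (hβ j) (Ne.symm hjβ))]
      refine ENNReal.top_mul (Finset.prod_ne_zero_iff.2 fun i _ hzero => ?_)
      rcases ENNReal.rpow_eq_zero_iff.1 hzero with ⟨h1, h2⟩ | ⟨h1, h2⟩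
      · exact hz i h2.ne' h1
      · exact absurd h2 (not_lt.2 (hβ i))
    rw [hprod, ENNReal.mul_top (mul_ne_zero hD_ne_zero hQvol.1)]
    exact le_top
  push_neg at ht
  -- Main case
  set a0 : ℝ≥0∞ := ∏ i, lavg (w i) Q ^ β i with ha0
  have hfactor : ∀ i, lavg (w i) Q ^ β i ≠ 0 ∧ lavg (w i) Q ^ β i ≠ ⊤ := by
    intro i
    by_cases hib : β i = 0
    · rw [hib, ENNReal.rpow_zero]; norm_num
    · constructor
      · intro h
        rcases ENNReal.rpow_eq_zero_iff.1 h with ⟨h1, _⟩ | ⟨_, h2⟩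
        · exact hz i hib h1
        · exact absurd h2 (not_lt.2 (hβ i))
      · exact ENNReal.rpow_ne_top_of_nonneg (hβ i) (ht i hib)
  have ha0_ne_zero : a0 ≠ 0 := Finset.prod_ne_zero_iff.2 fun i _ => (hfactor i).1
  have ha0_ne_top : a0 ≠ ⊤ := (ENNReal.prod_lt_top fun i _ => (hfactor i).2.lt_top).ne
  set T : Set (Set (Fin n → ℝ)) := {P | P ∈ 𝒮 ∧ P ⊆ Q} with hT
  have hTS : T ⊆ 𝒮 := fun P hP => hP.1
  have hTc : T.Countable := hcount.mono (hTS.trans hSD)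
  have hPvol : ∀ P ∈ T, volume P ≠ 0 ∧ volume P ≠ ⊤ :=
    fun P hP => isCube_volume (hcube P (hSD (hTS hP)))
  have hintQ : ∀ i, ∫⁻ x in Q, w i x = lavg (w i) Q * volume Q := by
    intro i
    rw [show lavg (w i) Q = (∫⁻ x in Q, w i x) / volume Q from rfl,
      ENNReal.div_mul_cancel hQvol.1 hQvol.2]
  have hint_le : ∀ i, ∀ P ∈ T, ∫⁻ x in P, w i x ≤ lavg (w i) Q * volume Q := by
    intro i P hP
    rw [← hintQ i]
    exact lintegral_mono_set hP.2
  have hav_ne_top : ∀ P ∈ T, (∏ i, lavg (w i) P ^ β i) ≠ ⊤ := by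
    intro P hP
    refine (ENNReal.prod_lt_top fun i _ => ?_).ne
    by_cases hib : β i = 0
    · rw [hib, ENNReal.rpow_zero]; norm_num
    · refine (ENNReal.rpow_ne_top_of_nonneg (hβ i) ?_).lt_top
      rw [show lavg (w i) P = (∫⁻ x in P, w i x) / volume P from rfl]
      exact (ENNReal.div_lt_top
        (ne_top_of_le_ne_top (ENNReal.mul_ne_top (ht i hib) hQvol.2) (hint_le i P hP))
        (hPvol P hP).1).ne
  set Λ : ℕ → ℝ≥0∞ := fun k => (2 : ℝ≥0∞) ^ (((k : ℝ) + 1) / b') with hΛ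
  have hΛ0 : ∀ k, Λ k ≠ 0 := fun k =>
    (ENNReal.rpow_pos (by norm_num) h2top).ne'
  have hΛtop : ∀ k, Λ k ≠ ⊤ := fun k =>
    ENNReal.rpow_ne_top_of_nonneg (by positivity) h2top
  -- key covering implication
  have hkey : ∀ k : ℕ, ∀ P ∈ T,
      (2 : ℝ≥0∞) ^ (k + 1) * a0 ≤ ∏ i, lavg (w i) P ^ β i →
      ∃ i, β i ≠ 0 ∧ Λ k * lavg (w i) Q * volume P ≤ ∫⁻ x in P, w i x := by
    intro k P hP hle
    by_contra hcon
    push_neg at hcon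
    have hgood : ∀ i, lavg (w i) P ^ β i ≤ (Λ k * lavg (w i) Q) ^ β i := by
      intro i
      by_cases hib : β i = 0
      · rw [hib, ENNReal.rpow_zero, ENNReal.rpow_zero]
      · refine ENNReal.rpow_le_rpow ?_ (hβ i)
        rw [show lavg (w i) P = (∫⁻ x in P, w i x) / volume P from rfl]
        exact (ENNReal.div_le_iff (hPvol P hP).1 (hPvol P hP).2).2 (hcon i hib).le
    have hchain : (∏ i, lavg (w i) P ^ β i) ≤ Λ k ^ b * a0 := by
      calc ∏ i, lavg (w i) P ^ β i ≤ ∏ i, (Λ k * lavg (w i) Q) ^ β i :=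
            Finset.prod_le_prod' fun i _ => hgood i
        _ = ∏ i, (Λ k ^ β i * lavg (w i) Q ^ β i) :=
            Finset.prod_congr rfl fun i _ => ENNReal.mul_rpow_of_nonneg _ _ (hβ i)
        _ = (∏ i, Λ k ^ β i) * ∏ i, lavg (w i) Q ^ β i := Finset.prod_mul_distrib
        _ = Λ k ^ b * a0 := by
            rw [prod_rpow_const Finset.univ β (Λ k) (hΛ0 k) (hΛtop k), ← ha0, ← hb]
    have hlt : Λ k ^ b * a0 < (2 : ℝ≥0∞) ^ (k + 1) * a0 := by
      rw [mul_comm _ a0, mul_comm _ a0]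
      refine ENNReal.mul_lt_mul_right ha0_ne_zero ha0_ne_top ?_
      have h1 : Λ k ^ b = (2 : ℝ≥0∞) ^ ((((k : ℝ) + 1) / b') * b) :=
        (ENNReal.rpow_mul 2 _ b).symm
      have h2 : (2 : ℝ≥0∞) ^ ((k : ℝ) + 1) = (2 : ℝ≥0∞) ^ (k + 1) := by
        rw [← ENNReal.rpow_natCast 2 (k + 1)]
        norm_num
      rw [h1, ← h2]
      refine ENNReal.rpow_lt_rpow_of_exponent_lt h1lt2 h2top ?_
      have hk1 : (0 : ℝ) < (k : ℝ) + 1 := by positivity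
      have he : ((k : ℝ) + 1) / b' * b = ((k : ℝ) + 1) * (b / b') := by ring
      rw [he]
      calc ((k : ℝ) + 1) * (b / b') < ((k : ℝ) + 1) * 1 :=
            mul_lt_mul_of_pos_left ((div_lt_one hb'pos).2 hbb') hk1
        _ = (k : ℝ) + 1 := mul_one _
    exact absurd hle (not_le.2 (lt_of_le_of_lt hchain hlt))
  -- measure of the union at level k
  have hlevel : ∀ k : ℕ,
      volume (⋃₀ {P | P ∈ T ∧ (2 : ℝ≥0∞) ^ (k + 1) * a0 ≤ ∏ i, lavg (w i) P ^ β i})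
        ≤ (m : ℝ≥0∞) * (Λ k)⁻¹ * volume Q := by
    intro k
    set 𝒞' : Fin m → Set (Set (Fin n → ℝ)) := fun i =>
      {P | P ∈ T ∧ β i ≠ 0 ∧ Λ k * lavg (w i) Q * volume P ≤ ∫⁻ x in P, w i x} with h𝒞'
    have hcover : ⋃₀ {P | P ∈ T ∧ (2 : ℝ≥0∞) ^ (k + 1) * a0 ≤ ∏ i, lavg (w i) P ^ β i}
        ⊆ ⋃ i, ⋃₀ 𝒞' i := by
      rintro x ⟨P, ⟨hPT, hPle⟩, hxP⟩
      obtain ⟨i, hi1, hi2⟩ := hkey k P hPT hPle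
      exact mem_iUnion.2 ⟨i, ⟨P, ⟨hPT, hi1, hi2⟩, hxP⟩⟩
    refine le_trans (measure_mono hcover) ?_
    refine le_trans (measure_iUnion_fintype_le _ _) ?_
    have hone : ∀ i, volume (⋃₀ 𝒞' i) ≤ (Λ k)⁻¹ * volume Q := by
      intro i
      by_cases hib : β i = 0
      · have he : 𝒞' i = ∅ := by
          ext P; simp [h𝒞', hib]
        rw [he]; simp
      · have hAi0 := hz i hib
        have hAit := ht i hib
        have hx0 : Λ k * lavg (w i) Q ≠ 0 := mul_ne_zero (hΛ0 k) hAi0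
        have hxt : Λ k * lavg (w i) Q ≠ ⊤ := ENNReal.mul_ne_top (hΛtop k) hAit
        have h1 : volume (⋃₀ 𝒞' i)
            ≤ ((Λ k)⁻¹ * (lavg (w i) Q)⁻¹) * ∫⁻ x in Q, w i x := by
          refine union_bound (w i) _ (𝒞' i)
            (hTc.mono fun P hP => hP.1)
            (fun P hP P' hP' => hnest P (hSD (hTS hP.1)) P' (hSD (hTS hP'.1)))
            (fun P hP => isCube_measurableSet (hcube P (hSD (hTS hP.1))))
            (fun P hP => hP.1.2)
            (fun P hP => ?_)
          have hc := hP.2.2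
          calc volume P = (Λ k * lavg (w i) Q)⁻¹ * (Λ k * lavg (w i) Q * volume P) := by
                rw [← mul_assoc, ENNReal.inv_mul_cancel hx0 hxt, one_mul]
            _ ≤ (Λ k * lavg (w i) Q)⁻¹ * ∫⁻ x in P, w i x := mul_le_mul_right hc _
            _ = ((Λ k)⁻¹ * (lavg (w i) Q)⁻¹) * ∫⁻ x in P, w i x := by
                rw [ENNReal.mul_inv (Or.inl (hΛ0 k)) (Or.inl (hΛtop k))]
        refine le_trans h1 ?_
        rw [hintQ i, mul_assoc, ← mul_assoc (lavg (w i) Q)⁻¹,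
          ENNReal.inv_mul_cancel hAi0 hAit, one_mul]
    refine le_trans (Finset.sum_le_sum fun i _ => hone i) ?_
    rw [Finset.sum_const, Finset.card_univ, Fintype.card_fin, nsmul_eq_mul, mul_assoc]
  -- sparse bound at level k
  have hSk : ∀ k : ℕ,
      (∑' P : {P | P ∈ T ∧ (2 : ℝ≥0∞) ^ (k + 1) * a0 ≤ ∏ i, lavg (w i) P ^ β i},
        volume (P : Set (Fin n → ℝ)))
        ≤ (ENNReal.ofReal η)⁻¹ * ((m : ℝ≥0∞) * (Λ k)⁻¹ * volume Q) := by
    intro k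
    refine le_trans (sparse_tsum hη hSp (fun P hP => hTS hP.1)
      (hTc.mono fun P hP => hP.1)) ?_
    exact mul_le_mul_right (hlevel k) _
  have hbase : (∑' P : T, volume (P : Set (Fin n → ℝ)))
      ≤ (ENNReal.ofReal η)⁻¹ * volume Q := by
    refine le_trans (sparse_tsum hη hSp hTS hTc) ?_
    exact mul_le_mul_right (measure_mono (sUnion_subset fun P hP => hP.2)) _
  -- pointwise layer-cake bound
  have hpoint : ∀ P ∈ T, (∏ i, lavg (w i) P ^ β i) ≤ 2 * a0 +
      ∑' k : ℕ, (if (2 : ℝ≥0∞) ^ (k + 1) * a0 ≤ ∏ i, lavg (w i) P ^ β i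
        then (2 : ℝ≥0∞) ^ (k + 2) * a0 else 0) := by
    intro P hP
    by_cases hsmall : (∏ i, lavg (w i) P ^ β i) ≤ 2 * a0
    · exact le_trans hsmall (le_add_right le_rfl)
    push_neg at hsmall
    obtain ⟨N, hN⟩ : ∃ N : ℕ, (∏ i, lavg (w i) P ^ β i) < 2 ^ N * a0 := by
      obtain ⟨N, hN⟩ := ENNReal.exists_nat_gt
        (ENNReal.div_lt_top (hav_ne_top P hP) ha0_ne_zero).ne
      refine ⟨N, ?_⟩
      have h1 : (∏ i, lavg (w i) P ^ β i) < N * a0 :=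
        (ENNReal.div_lt_iff (Or.inl ha0_ne_zero) (Or.inl ha0_ne_top)).1 hN
      refine lt_of_lt_of_le h1 (mul_le_mul_left ?_ a0)
      exact_mod_cast Nat.le_of_lt (Nat.lt_two_pow_self (n := N))
    set p : ℕ → Prop := fun k => (2 : ℝ≥0∞) ^ (k + 1) * a0 ≤ ∏ i, lavg (w i) P ^ β i with hp
    have hp0 : p 0 := by simpa [hp] using hsmall.le
    have hpow_mono : ∀ {s t : ℕ}, s ≤ t → (2 : ℝ≥0∞) ^ s ≤ (2 : ℝ≥0∞) ^ t :=
      fun h => pow_le_pow_right₀ (by norm_num) h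
    have hpN : ¬ p N := by
      intro h
      exact absurd h (not_le.2 (lt_of_lt_of_le hN (mul_le_mul_left (hpow_mono (by omega)) a0)))
    set K := Nat.findGreatest p N with hK
    have hpK : p K := Nat.findGreatest_spec (Nat.zero_le N) hp0
    have hKltN : K < N := by
      rcases lt_or_eq_of_le (Nat.findGreatest_le (P := p) N) with h | h
      · exact h
      · exact absurd (h ▸ hpK) hpN
    have hnotK : ¬ p (K + 1) := Nat.findGreatest_is_greatest (n := N) (by omega) (by omega)
    have hvlt : (∏ i, lavg (w i) P ^ β i) < 2 ^ (K + 2) * a0 := not_le.1 hnotK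
    have hterm : (2 : ℝ≥0∞) ^ (K + 2) * a0
        ≤ ∑' k : ℕ, (if p k then (2 : ℝ≥0∞) ^ (k + 2) * a0 else 0) := by
      have h := ENNReal.le_tsum (f := fun k => if p k then (2 : ℝ≥0∞) ^ (k + 2) * a0 else 0) K
      simpa [hpK] using h
    exact le_trans hvlt.le (le_add_left hterm)
  -- geometric series bound
  have hterm2 : ∀ k : ℕ, (2 : ℝ≥0∞) ^ (k + 2) * (Λ k)⁻¹ ≤ 4 * r ^ k := by
    intro k
    have h1 : ((2 : ℝ≥0∞)) ^ (k + 2) = (2 : ℝ≥0∞) ^ (((k : ℝ) + 2)) := by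
      rw [← ENNReal.rpow_natCast 2 (k + 2)]
      norm_num
    have h2 : (Λ k)⁻¹ = (2 : ℝ≥0∞) ^ (-(((k : ℝ) + 1) / b')) := by
      rw [ENNReal.rpow_neg]
    have h3 : (4 : ℝ≥0∞) * r ^ k = (2 : ℝ≥0∞) ^ ((2 : ℝ) + (k : ℝ) * (1 - 1 / b')) := by
      rw [ENNReal.rpow_add _ _ h2zero h2top]
      congr 1
      · rw [show (2 : ℝ) = ((2 : ℕ) : ℝ) by norm_num, ENNReal.rpow_natCast]
        norm_num
      · rw [← ENNReal.rpow_natCast r k, hr, ← ENNReal.rpow_mul, mul_comm]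
    rw [h1, h2, ← ENNReal.rpow_add _ _ h2zero h2top, h3]
    refine ENNReal.rpow_le_rpow_of_exponent_le (by norm_num) ?_
    have hu : 0 ≤ 1 / b' := by positivity
    have he1 : ((k : ℝ) + 1) / b' = (k : ℝ) * (1 / b') + 1 / b' := by ring
    have he2 : (k : ℝ) * (1 - 1 / b') = (k : ℝ) - (k : ℝ) * (1 / b') := by ring
    rw [he1, he2]
    linarith
  have hgeo : (∑' k : ℕ, (2 : ℝ≥0∞) ^ (k + 2) * (Λ k)⁻¹) ≤ 4 * (1 - r)⁻¹ := by
    refine le_trans (ENNReal.tsum_le_tsum hterm2) ?_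
    rw [ENNReal.tsum_mul_left, ENNReal.tsum_geometric]
  -- per-level sums
  have hklevel : ∀ k : ℕ,
      (∑' P : T, (if (2 : ℝ≥0∞) ^ (k + 1) * a0 ≤ ∏ i, lavg (w i) (P : Set (Fin n → ℝ)) ^ β i
          then (2 : ℝ≥0∞) ^ (k + 2) * a0 * volume (P : Set (Fin n → ℝ)) else 0))
      ≤ (2 : ℝ≥0∞) ^ (k + 2) * a0 *
          ((ENNReal.ofReal η)⁻¹ * ((m : ℝ≥0∞) * (Λ k)⁻¹ * volume Q)) := by
    intro k
    set 𝒞k : Set (Set (Fin n → ℝ)) :=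
      {P | P ∈ T ∧ (2 : ℝ≥0∞) ^ (k + 1) * a0 ≤ ∏ i, lavg (w i) P ^ β i} with h𝒞k
    set g : Set (Fin n → ℝ) → ℝ≥0∞ :=
      fun P => (2 : ℝ≥0∞) ^ (k + 2) * a0 * volume P with hg
    have e1 : ∀ P : T,
        (if (2 : ℝ≥0∞) ^ (k + 1) * a0 ≤ ∏ i, lavg (w i) (P : Set (Fin n → ℝ)) ^ β i
          then (2 : ℝ≥0∞) ^ (k + 2) * a0 * volume (P : Set (Fin n → ℝ)) else 0)
          = 𝒞k.indicator g ↑P := by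
      intro P
      by_cases hc : (2 : ℝ≥0∞) ^ (k + 1) * a0 ≤ ∏ i, lavg (w i) (P : Set (Fin n → ℝ)) ^ β i
      · rw [if_pos hc, Set.indicator_of_mem (show (↑P : Set (Fin n → ℝ)) ∈ 𝒞k from ⟨P.2, hc⟩)]
      · rw [if_neg hc, Set.indicator_of_notMem (fun hmm => hc hmm.2)]
    rw [tsum_congr e1]
    have e2 : (∑' P : T, 𝒞k.indicator g ↑P) = ∑' P : 𝒞k, g ↑P := by
      rw [tsum_subtype T (𝒞k.indicator g), tsum_subtype 𝒞k g]
      refine tsum_congr fun P => ?_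
      by_cases h1 : P ∈ 𝒞k
      · rw [Set.indicator_of_mem h1.1]
      · rw [Set.indicator_of_notMem h1]
        by_cases h2 : P ∈ T
        · rw [Set.indicator_of_mem h2, Set.indicator_of_notMem h1]
        · rw [Set.indicator_of_notMem h2]
    rw [e2]
    have e3 : (∑' P : 𝒞k, g ↑P)
        = (2 : ℝ≥0∞) ^ (k + 2) * a0 * ∑' P : 𝒞k, volume (P : Set (Fin n → ℝ)) := by
      simp only [hg]
      rw [ENNReal.tsum_mul_left]
    rw [e3]
    exact mul_le_mul_right (hSk k) _
  -- assemble everything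
  show (∑' P : T, volume (P : Set (Fin n → ℝ)) * ∏ i, lavg (w i) (P : Set (Fin n → ℝ)) ^ β i)
      ≤ D * volume Q * a0
  calc (∑' P : T, volume (P : Set (Fin n → ℝ)) * ∏ i, lavg (w i) (P : Set (Fin n → ℝ)) ^ β i)
      ≤ ∑' P : T, (2 * a0 * volume (P : Set (Fin n → ℝ)) +
          ∑' k : ℕ, (if (2 : ℝ≥0∞) ^ (k + 1) * a0 ≤ ∏ i, lavg (w i) (P : Set (Fin n → ℝ)) ^ β i
            then (2 : ℝ≥0∞) ^ (k + 2) * a0 * volume (P : Set (Fin n → ℝ)) else 0)) := by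
        refine ENNReal.tsum_le_tsum fun P => ?_
        calc volume (P : Set (Fin n → ℝ)) * ∏ i, lavg (w i) (P : Set (Fin n → ℝ)) ^ β i
            ≤ volume (P : Set (Fin n → ℝ)) * (2 * a0 +
                ∑' k : ℕ, (if (2 : ℝ≥0∞) ^ (k + 1) * a0
                    ≤ ∏ i, lavg (w i) (P : Set (Fin n → ℝ)) ^ β i
                  then (2 : ℝ≥0∞) ^ (k + 2) * a0 else 0)) :=
              mul_le_mul_right (hpoint (↑P) P.2) _
          _ = _ := by
              rw [mul_add, ← ENNReal.tsum_mul_left]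
              congr 1
              · ring
              · refine tsum_congr fun k => ?_
                split_ifs
                · ring
                · rw [mul_zero]
    _ = 2 * a0 * (∑' P : T, volume (P : Set (Fin n → ℝ))) +
        ∑' k : ℕ, ∑' P : T,
          (if (2 : ℝ≥0∞) ^ (k + 1) * a0 ≤ ∏ i, lavg (w i) (P : Set (Fin n → ℝ)) ^ β i
            then (2 : ℝ≥0∞) ^ (k + 2) * a0 * volume (P : Set (Fin n → ℝ)) else 0) := by
        rw [ENNReal.tsum_add, ENNReal.tsum_mul_left, ENNReal.tsum_comm]
    _ ≤ 2 * a0 * ((ENNReal.ofReal η)⁻¹ * volume Q) +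
        ∑' k : ℕ, (2 : ℝ≥0∞) ^ (k + 2) * a0 *
          ((ENNReal.ofReal η)⁻¹ * ((m : ℝ≥0∞) * (Λ k)⁻¹ * volume Q)) :=
        add_le_add (mul_le_mul_right hbase _) (ENNReal.tsum_le_tsum fun k => hklevel k)
    _ = 2 * a0 * ((ENNReal.ofReal η)⁻¹ * volume Q) +
        (a0 * ((ENNReal.ofReal η)⁻¹ * ((m : ℝ≥0∞) * volume Q))) *
          ∑' k : ℕ, (2 : ℝ≥0∞) ^ (k + 2) * (Λ k)⁻¹ := by
        rw [← ENNReal.tsum_mul_left]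
        refine congrArg _ (tsum_congr fun k => by ring)
    _ ≤ 2 * a0 * ((ENNReal.ofReal η)⁻¹ * volume Q) +
        (a0 * ((ENNReal.ofReal η)⁻¹ * ((m : ℝ≥0∞) * volume Q))) * (4 * (1 - r)⁻¹) :=
        add_le_add_right (mul_le_mul_right hgeo _) _
    _ = D * volume Q * a0 := by
        rw [hD]; ring

end
end

section
/- Multilinear Coifman–Rochberg estimate: for every 0 < δ < 1/m and all locally integrable functions f₁,…,f_m with ℳ(f⃗)(x) < ∞ a.e., the function (ℳ(f⃗))^δ is an A₁ weight with [(ℳ(f⃗))^δ]_{A₁} ≤ c_n/(1 − mδ), where ℳ(f⃗)(x) = sup_{Q ∋ x} ∏_{j=1}^m (1/|Q|)∫_Q |f_j| dy is the multilinear maximal function. -/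
open MeasureTheory Set Filter ENNReal

noncomputable section

/-- The multilinear maximal function `ℳ(f⃗)(x) = sup_{Q ∋ x} ∏ⱼ ⟨|fⱼ|⟩_Q`. -/
def multiMax {n m : ℕ} (f : Fin m → (Fin n → ℝ) → ℝ) (x : Fin n → ℝ) : ℝ≥0∞ :=
  ⨆ (Q : Set (Fin n → ℝ)) (_ : IsCube Q) (_ : x ∈ Q),
    ∏ i, lavg (fun y => ENNReal.ofReal |f i y|) Q

/-- The `A₁` constant `[w]_{A₁} = sup_Q ⟨w⟩_Q · ess sup_Q w⁻¹`. -/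
def A1Const {n : ℕ} (w : (Fin n → ℝ) → ℝ≥0∞) : ℝ≥0∞ :=
  ⨆ (Q : Set (Fin n → ℝ)) (_ : IsCube Q),
    lavg w Q * essSup (fun x => (w x)⁻¹) (volume.restrict Q)

namespace CR

variable {n : ℕ}

/-- axis-parallel cube with corner `a` and side `h`. -/
def cube (a : Fin n → ℝ) (h : ℝ) : Set (Fin n → ℝ) :=
  Set.univ.pi fun i => Set.Ico (a i) (a i + h)

lemma isCube_cube (a : Fin n → ℝ) {h : ℝ} (hh : 0 < h) : IsCube (cube a h) :=
  ⟨a, h, hh, rfl⟩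

lemma mem_cube {a : Fin n → ℝ} {h : ℝ} {x : Fin n → ℝ} :
    x ∈ cube a h ↔ ∀ i, a i ≤ x i ∧ x i < a i + h := by
  simp [cube, Set.mem_univ_pi, Set.mem_Ico]

lemma measurableSet_cube {a : Fin n → ℝ} {h : ℝ} : MeasurableSet (cube a h) :=
  MeasurableSet.univ_pi fun i => measurableSet_Ico

lemma volume_cube (a : Fin n → ℝ) (h : ℝ) :
    volume (cube a h) = ENNReal.ofReal h ^ n := by
  rw [cube, Real.volume_pi_Ico]
  simp

lemma volume_cube_pos (a : Fin n → ℝ) {h : ℝ} (hh : 0 < h) :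
    volume (cube a h) ≠ 0 := by
  rw [volume_cube]
  exact pow_ne_zero _ (by simp [ENNReal.ofReal_eq_zero]; linarith)

lemma volume_cube_ne_top (a : Fin n → ℝ) (h : ℝ) : volume (cube a h) ≠ ⊤ := by
  rw [volume_cube]
  exact ENNReal.pow_ne_top ENNReal.ofReal_ne_top

lemma cube_subset_closedBall {a : Fin n → ℝ} {h : ℝ} (hh : 0 < h) :
    cube a h ⊆ Metric.closedBall (fun i => a i + h / 2) (h / 2) := by
  intro x hx
  rw [mem_cube] at hx
  rw [Metric.mem_closedBall]
  rw [dist_pi_le_iff (by linarith)]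
  intro i
  rw [Real.dist_eq, abs_le]
  rcases hx i with ⟨h1, h2⟩
  constructor <;> linarith

lemma corner_mem_cube {a : Fin n → ℝ} {h : ℝ} (hh : 0 < h) : a ∈ cube a h := by
  rw [mem_cube]; intro i; exact ⟨le_refl _, by linarith⟩

lemma volume_closedBall' (c : Fin n → ℝ) {ρ : ℝ} (hρ : 0 ≤ ρ) :
    volume (Metric.closedBall c ρ) = ENNReal.ofReal (2 * ρ) ^ n := by
  rw [MeasureTheory.volume_pi_closedBall c hρ]
  simp [Real.volume_closedBall]

/-- the multilinear maximal function dominates the product of averages on any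
cube containing the point. -/
lemma le_multiMax {m : ℕ} (f : Fin m → (Fin n → ℝ) → ℝ) {Q : Set (Fin n → ℝ)}
    (hQ : IsCube Q) {x : Fin n → ℝ} (hx : x ∈ Q) :
    ∏ i, lavg (fun y => ENNReal.ofReal |f i y|) Q ≤ multiMax f x := by
  rw [multiMax]
  exact le_iSup_of_le Q (le_iSup_of_le hQ (le_iSup_of_le hx le_rfl))



/-- Hölder's inequality for countable sums in `ℝ≥0∞`. -/
lemma holder_tsum {κ : Type*} [Countable κ] {m : ℕ} (hm : m ≠ 0) (c : Fin m → κ → ℝ≥0∞) :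
    ∑' (q : κ), ∏ i, (c i q) ^ (1/(m:ℝ)) ≤ ∏ i, (∑' (q : κ), c i q) ^ (1/(m:ℝ)) := by
  letI : MeasurableSpace κ := ⊤
  haveI : MeasurableSingletonClass κ := ⟨fun _ => trivial⟩
  have hmeas : ∀ (g : κ → ℝ≥0∞), Measurable g := fun g s _ => trivial
  have H := ENNReal.lintegral_prod_norm_pow_le (μ := Measure.count)
      (Finset.univ : Finset (Fin m)) (f := fun i q => c i q)
      (fun i _ => (hmeas _).aemeasurable) (p := fun _ => 1/(m:ℝ))
      (by
        rw [Finset.sum_const, Finset.card_univ, Fintype.card_fin, nsmul_eq_mul]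
        field_simp)
      (fun i _ => by positivity)
  rw [MeasureTheory.lintegral_count' (hmeas _)] at H
  refine H.trans ?_
  refine Finset.prod_le_prod' fun i _ => ?_
  rw [MeasureTheory.lintegral_count' (hmeas _)]

/-- geometric series bound with ratio `2^(-s)`, `0 < s ≤ 1`. -/
lemma tsum_pow_two_neg {s : ℝ} (hs0 : 0 < s) (hs1 : s ≤ 1) :
    ∑' k : ℕ, ((2:ℝ≥0∞) ^ (-s)) ^ k ≤ ENNReal.ofReal (2/s) := by
  have key : (2:ℝ) ^ (-s) ≤ 1 - s/2 := by
    have hc := convexOn_exp.2 (Set.mem_univ (0:ℝ)) (Set.mem_univ (-Real.log 2))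
      (by linarith : (0:ℝ) ≤ 1 - s) hs0.le (by ring)
    have e1 : (1-s) • (0:ℝ) + s • (-Real.log 2) = Real.log 2 * (-s) := by
      simp [smul_eq_mul]; ring
    have e2 : Real.exp (Real.log 2 * (-s)) = (2:ℝ) ^ (-s) := by
      rw [Real.rpow_def_of_pos (by norm_num : (0:ℝ) < 2)]
    rw [e1, e2] at hc
    have e3 : Real.exp (-Real.log 2) = 1/2 := by
      rw [Real.exp_neg, Real.exp_log (by norm_num : (0:ℝ) < 2)]; norm_num
    rw [Real.exp_zero, e3] at hc
    simp only [smul_eq_mul] at hc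
    linarith
  have h2 : (2:ℝ≥0∞) ^ (-s) = ENNReal.ofReal ((2:ℝ) ^ (-s)) := by
    rw [← ENNReal.ofReal_rpow_of_pos (by norm_num : (0:ℝ) < 2)]
    norm_num
  rw [ENNReal.tsum_geometric, h2]
  have h3 : (1:ℝ≥0∞) - ENNReal.ofReal ((2:ℝ) ^ (-s)) = ENNReal.ofReal (1 - (2:ℝ)^(-s)) := by
    rw [ENNReal.ofReal_sub _ (by positivity), ENNReal.ofReal_one]
  rw [h3, ← ENNReal.ofReal_inv_of_pos (by linarith)]
  apply ENNReal.ofReal_le_ofReal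
  rw [inv_le_comm₀ (by linarith) (by positivity)]
  have : s / 2 ≤ 1 - (2:ℝ)^(-s) := by linarith
  calc (2/s)⁻¹ = s/2 := by rw [inv_div]
    _ ≤ 1 - (2:ℝ)^(-s) := this

lemma div_le_mul_div {A v v' K : ℝ≥0∞} (hv0 : v ≠ 0) (hvt : v ≠ ⊤) (hv'0 : v' ≠ 0)
    (hv't : v' ≠ ⊤) (hK : v' ≤ K * v) : A / v ≤ K * (A / v') := by
  rw [ENNReal.div_le_iff hv0 hvt]
  calc A = (A / v') * v' := (ENNReal.div_mul_cancel hv'0 hv't).symm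
    _ ≤ (A / v') * (K * v) := mul_le_mul_right hK _
    _ = K * (A / v') * v := by ring


end CR

namespace CR
variable {n : ℕ}

set_option maxHeartbeats 1000000 in
/-- far-cube geometry: a cube containing `x ∈ cube a h` that is not contained in the
`5`-fold dilation `cube (a - 2h) (5h)` can be enlarged to a cube `R'` containing
`cube a h`, with controlled averages. -/
lemma far_lemma {m : ℕ} (f : Fin m → (Fin n → ℝ) → ℝ) {a b : Fin n → ℝ} {h r : ℝ}
    (hh : 0 < h) (hr : 0 < r) {x : Fin n → ℝ} (hxQ : x ∈ cube a h) (hxR : x ∈ cube b r)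
    (hnot : ¬ (cube b r ⊆ cube (fun i => a i - 2*h) (5*h))) :
    ∃ R' : Set (Fin n → ℝ), IsCube R' ∧ cube a h ⊆ R' ∧
      ∏ i, lavg (fun y => ENNReal.ofReal |f i y|) (cube b r)
        ≤ (ENNReal.ofReal ((3/2:ℝ)^n)) ^ m * ∏ i, lavg (fun y => ENNReal.ofReal |f i y|) R' := by
  rw [Set.not_subset] at hnot
  obtain ⟨z, hzR, hzQs⟩ := hnot
  rw [mem_cube] at hxQ hxR hzR
  -- the side of `cube b r` is large: `2h < r`.
  have hr2 : 2*h < r := by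
    have : ¬ ∀ i, a i - 2*h ≤ z i ∧ z i < a i - 2*h + 5*h := by
      intro hcon; exact hzQs (mem_cube.2 hcon)
    push_neg at this
    obtain ⟨i, hi⟩ := this
    rcases lt_or_ge (z i) (a i - 2*h) with hz | hz
    · have h1 := (hxQ i).1
      have h2 := (hxR i).2
      have h3 := (hzR i).1
      linarith
    · have h4 := hi hz
      have h1 := (hxQ i).2
      have h2 := (hxR i).1
      have h3 := (hzR i).2
      linarith
  refine ⟨cube (fun i => min (b i) (a i)) (r + h), isCube_cube _ (by linarith), ?_, ?_⟩
  · intro y hy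
    rw [mem_cube] at hy ⊢
    intro i
    have h1 := (hy i).1
    have h2 := (hy i).2
    have h3 := (hxQ i).1
    have h4 := (hxR i).2
    constructor
    · exact le_trans (min_le_right _ _) h1
    · rcases le_total (b i) (a i) with hba | hba
      · rw [min_eq_left hba]; linarith
      · rw [min_eq_right hba]; linarith
  · have hsub : cube b r ⊆ cube (fun i => min (b i) (a i)) (r + h) := by
      intro y hy
      rw [mem_cube] at hy ⊢
      intro i
      have h1 := (hy i).1
      have h2 := (hy i).2
      have h3 := (hxQ i).2
      have h4 := (hxR i).1
      constructor
      · exact le_trans (min_le_left _ _) h1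
      · rcases le_total (b i) (a i) with hba | hba
        · rw [min_eq_left hba]; linarith
        · rw [min_eq_right hba]; linarith
    have hvol : volume (cube (fun i => min (b i) (a i)) (r + h))
        ≤ ENNReal.ofReal ((3/2:ℝ)^n) * volume (cube b r) := by
      rw [volume_cube, volume_cube, ENNReal.ofReal_pow (by norm_num : (0:ℝ) ≤ 3/2),
        ← mul_pow]
      refine pow_le_pow_left' ?_ _
      rw [← ENNReal.ofReal_mul (by norm_num : (0:ℝ) ≤ 3/2)]
      exact ENNReal.ofReal_le_ofReal (by linarith)
    have hKi : ∀ g : (Fin n → ℝ) → ℝ≥0∞,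
        lavg g (cube b r) ≤ ENNReal.ofReal ((3/2:ℝ)^n) * lavg g (cube (fun i => min (b i) (a i)) (r + h)) := by
      intro g
      rw [lavg, lavg]
      calc (∫⁻ y in cube b r, g y) / volume (cube b r)
          ≤ (∫⁻ y in cube (fun i => min (b i) (a i)) (r + h), g y) / volume (cube b r) :=
            ENNReal.div_le_div_right (lintegral_mono_set hsub) _
        _ ≤ _ := div_le_mul_div (volume_cube_pos _ hr) (volume_cube_ne_top _ _)
              (volume_cube_pos _ (by linarith)) (volume_cube_ne_top _ _) hvol
    calc ∏ i, lavg (fun y => ENNReal.ofReal |f i y|) (cube b r)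
        ≤ ∏ _i : Fin m, (ENNReal.ofReal ((3/2:ℝ)^n) *
            lavg (fun y => ENNReal.ofReal |f (_i) y|) (cube (fun i => min (b i) (a i)) (r + h))) :=
          Finset.prod_le_prod' fun i _ => hKi _
      _ = (ENNReal.ofReal ((3/2:ℝ)^n)) ^ m *
            ∏ i, lavg (fun y => ENNReal.ofReal |f i y|) (cube (fun i => min (b i) (a i)) (r + h)) := by
          rw [Finset.prod_mul_distrib, Finset.prod_const, Finset.card_univ, Fintype.card_fin]

end CR

namespace CR
variable {n : ℕ}

set_option maxHeartbeats 2000000 in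
lemma weak_type {m : ℕ} (hn : 0 < n) (hm : 0 < m) (f : Fin m → (Fin n → ℝ) → ℝ)
    (as : Fin n → ℝ) {hs : ℝ} (hhs : 0 < hs)
    {t : ℝ≥0∞} (ht0 : t ≠ 0) (htt : t ≠ ⊤) :
    ∃ U : Set (Fin n → ℝ), MeasurableSet U ∧
      {x | t < ⨆ (R : Set (Fin n → ℝ)) (_ : IsCube R ∧ x ∈ R ∧ R ⊆ cube as hs),
            ∏ i, lavg (fun y => ENNReal.ofReal |f i y|) R} ⊆ U ∧
      volume U ≤ ENNReal.ofReal ((4:ℝ)^n) *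
        ((∏ i, ∫⁻ y in cube as hs, ENNReal.ofReal |f i y|) / t) ^ (1/(m:ℝ)) := by
  classical
  set g : Fin m → (Fin n → ℝ) → ℝ≥0∞ := fun i y => ENNReal.ofReal |f i y| with hg
  set S := {x | t < ⨆ (R : Set (Fin n → ℝ)) (_ : IsCube R ∧ x ∈ R ∧ R ⊆ cube as hs),
      ∏ i, lavg (g i) R} with hS
  have hex : ∀ x ∈ S, ∃ (b : Fin n → ℝ) (r : ℝ), 0 < r ∧ r / 2 ≤ hs ∧ x ∈ cube b r ∧
      cube b r ⊆ cube as hs ∧ t < ∏ i, lavg (g i) (cube b r) := by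
    intro x hx
    rw [hS, Set.mem_setOf_eq, lt_iSup_iff] at hx
    obtain ⟨R, hR⟩ := hx
    rw [lt_iSup_iff] at hR
    obtain ⟨⟨hRc, hxR, hRsub⟩, hlt⟩ := hR
    obtain ⟨b, r, hr, rfl⟩ := hRc
    refine ⟨b, r, hr, ?_, hxR, hRsub, hlt⟩
    -- side bound
    have hb : b ∈ cube as hs := hRsub (corner_mem_cube hr)
    have hy : (fun i => b i + r/2) ∈ cube as hs := by
      refine hRsub (mem_cube.2 fun i => ⟨by linarith, by linarith⟩)
    rw [mem_cube] at hb hy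
    have h1 := (hb ⟨0, hn⟩).1
    have h2 := (hy ⟨0, hn⟩).2
    linarith
  choose! bb rr hrpos hrle hxb hsub hlt using hex
  set c : (Fin n → ℝ) → (Fin n → ℝ) := fun p => fun i => bb p i + rr p / 2 with hc
  obtain ⟨u, huS, hdisj, hcover⟩ :=
    Vitali.exists_disjoint_subfamily_covering_enlargement_closedBall S c
      (fun p => rr p / 2) hs (fun p hp => hrle p hp) 4 (by norm_num)
  have hcount : u.Countable := by
    refine hdisj.countable_of_nonempty_interior fun p hp => ?_
    have h0 : (Metric.ball (c p) (rr p / 2)).Nonempty :=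
      Metric.nonempty_ball.2 (by linarith [hrpos p (huS hp)])
    exact h0.mono Metric.ball_subset_interior_closedBall
  haveI := hcount.to_subtype
  refine ⟨⋃ p ∈ u, Metric.closedBall (c p) (4 * (rr p / 2)),
    MeasurableSet.biUnion hcount fun p _ => measurableSet_closedBall, ?_, ?_⟩
  · -- covering
    intro x hx
    have hx' : x ∈ Metric.closedBall (c x) (rr x / 2) :=
      cube_subset_closedBall (hrpos x hx) (hxb x hx)
    obtain ⟨q, hq, hsub'⟩ := hcover x hx
    exact Set.mem_biUnion hq (hsub' hx')
  · -- measure bound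
    set ν : Fin m → Measure (Fin n → ℝ) := fun i => volume.withDensity (g i) with hν
    have hcube_disj : u.PairwiseDisjoint fun p => cube (bb p) (rr p) := by
      intro p hp q hq hne
      exact (hdisj hp hq hne).mono (cube_subset_closedBall (hrpos p (huS hp)))
        (cube_subset_closedBall (hrpos q (huS hq)))
    have hνsum : ∀ i, ∑' (p : ↥u), ν i (cube (bb p) (rr p))
        ≤ ∫⁻ y in cube as hs, g i y := by
      intro i
      rw [← measure_biUnion hcount hcube_disj fun p _ => measurableSet_cube]
      rw [← withDensity_apply (g i) measurableSet_cube]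
      exact measure_mono (Set.iUnion₂_subset fun p hp => hsub p (huS hp))
    have hkey : ∀ p : ↥u, volume (cube (bb p) (rr p))
        ≤ (∏ i, ν i (cube (bb p) (rr p))) ^ (1/(m:ℝ)) / t ^ (1/(m:ℝ)) := by
      intro ⟨p, hp⟩
      have hpS := huS hp
      have hV0 := volume_cube_pos (bb p) (hrpos p hpS)
      have hVt := volume_cube_ne_top (bb p) (rr p)
      have hprod : t * volume (cube (bb p) (rr p)) ^ m ≤ ∏ i, ν i (cube (bb p) (rr p)) := by
        have h1 := (hlt p hpS).le
        have e : ∏ i, lavg (g i) (cube (bb p) (rr p))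
            = (∏ i, ν i (cube (bb p) (rr p))) / volume (cube (bb p) (rr p)) ^ m := by
          simp only [lavg, div_eq_mul_inv, Finset.prod_mul_distrib, Finset.prod_const,
            Finset.card_univ, Fintype.card_fin, ENNReal.inv_pow]
          congr 1
          refine Finset.prod_congr rfl fun i _ => ?_
          rw [hν]
          rw [withDensity_apply (g i) measurableSet_cube]
        rw [e] at h1
        rw [← ENNReal.le_div_iff_mul_le (Or.inl (pow_ne_zero _ hV0))
          (Or.inl (ENNReal.pow_ne_top hVt))]
        exact h1
      have h2 : volume (cube (bb p) (rr p)) ^ m ≤ (∏ i, ν i (cube (bb p) (rr p))) / t := by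
        rw [ENNReal.le_div_iff_mul_le (Or.inl ht0) (Or.inl htt), mul_comm]
        exact hprod
      have h3 := ENNReal.rpow_le_rpow h2 (by positivity : (0:ℝ) ≤ 1/(m:ℝ))
      rw [ENNReal.div_rpow_of_nonneg _ _ (by positivity : (0:ℝ) ≤ 1/(m:ℝ))] at h3
      refine le_trans ?_ h3
      rw [← ENNReal.rpow_natCast (volume (cube (bb p) (rr p))) m, ← ENNReal.rpow_mul]
      rw [mul_one_div, div_self (Nat.cast_ne_zero.2 hm.ne' : (m:ℝ) ≠ 0), ENNReal.rpow_one]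
    calc volume (⋃ p ∈ u, Metric.closedBall (c p) (4 * (rr p / 2)))
        ≤ ∑' (p : ↥u), volume (Metric.closedBall (c (p:Fin n → ℝ)) (4 * (rr (p:Fin n → ℝ) / 2))) :=
          measure_biUnion_le volume hcount _
      _ = ∑' (p : ↥u), ENNReal.ofReal ((4:ℝ)^n) * volume (cube (bb (p : Fin n → ℝ)) (rr (p : Fin n → ℝ))) := by
          refine tsum_congr fun p => ?_
          have hrp := hrpos _ (huS p.2)
          rw [volume_closedBall' _ (by linarith), volume_cube]
          rw [show (2:ℝ) * (4 * (rr (p:Fin n → ℝ) / 2)) = 4 * rr (p:Fin n → ℝ) by ring]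
          rw [ENNReal.ofReal_mul (by norm_num : (0:ℝ) ≤ 4), mul_pow,
            ← ENNReal.ofReal_pow (by norm_num : (0:ℝ) ≤ 4)]
      _ = ENNReal.ofReal ((4:ℝ)^n) * ∑' (p : ↥u), volume (cube (bb (p : Fin n → ℝ)) (rr (p : Fin n → ℝ))) :=
          ENNReal.tsum_mul_left
      _ ≤ ENNReal.ofReal ((4:ℝ)^n) *
          ((∏ i, ∫⁻ y in cube as hs, g i y) / t) ^ (1/(m:ℝ)) := by
          refine mul_le_mul_right ?_ _
          calc ∑' (p : ↥u), volume (cube (bb (p:Fin n → ℝ)) (rr (p:Fin n → ℝ)))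
              ≤ ∑' (p : ↥u), (∏ i, ν i (cube (bb (p:Fin n → ℝ)) (rr (p:Fin n → ℝ)))) ^ (1/(m:ℝ)) / t ^ (1/(m:ℝ)) :=
                ENNReal.tsum_le_tsum fun p => hkey p
            _ = (∑' (p : ↥u), (∏ i, ν i (cube (bb (p:Fin n → ℝ)) (rr (p:Fin n → ℝ)))) ^ (1/(m:ℝ))) / t ^ (1/(m:ℝ)) := by
                simp only [div_eq_mul_inv]
                exact ENNReal.tsum_mul_right
            _ ≤ (∏ i, (∑' (p : ↥u), ν i (cube (bb (p:Fin n → ℝ)) (rr (p:Fin n → ℝ)))) ^ (1/(m:ℝ))) / t ^ (1/(m:ℝ)) := by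
                refine ENNReal.div_le_div_right ?_ _
                have := holder_tsum (κ := ↥u) hm.ne'
                  (fun i p => ν i (cube (bb (p:Fin n → ℝ)) (rr (p:Fin n → ℝ))))
                refine le_trans (le_of_eq ?_) (this.trans (le_of_eq rfl))
                refine tsum_congr fun p => ?_
                rw [← ENNReal.prod_rpow_of_nonneg (by positivity : (0:ℝ) ≤ 1/(m:ℝ))]
            _ ≤ (∏ i, (∫⁻ y in cube as hs, g i y) ^ (1/(m:ℝ))) / t ^ (1/(m:ℝ)) := by
                refine ENNReal.div_le_div_right ?_ _
                exact Finset.prod_le_prod' fun i _ =>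
                  ENNReal.rpow_le_rpow (hνsum i) (by positivity)
            _ = ((∏ i, ∫⁻ y in cube as hs, g i y) / t) ^ (1/(m:ℝ)) := by
                rw [ENNReal.div_rpow_of_nonneg _ _ (by positivity : (0:ℝ) ≤ 1/(m:ℝ)),
                  ENNReal.prod_rpow_of_nonneg (by positivity : (0:ℝ) ≤ 1/(m:ℝ))]

end CR

namespace CR

set_option maxHeartbeats 1000000 in
lemma series_bound {m : ℕ} (hm : 0 < m) {δ : ℝ} (hδ0 : 0 < δ) (hδ1 : (m:ℝ)*δ < 1)
    {T P : ℝ≥0∞} (hT0 : T ≠ 0) (hTt : T ≠ ⊤) (hP0 : P ≠ 0) (hPt : P ≠ ⊤) :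
    ∑' k : ℕ, ((2:ℝ≥0∞)^(m*(k+1)) * T)^δ * (P / ((2:ℝ≥0∞)^(m*k) * T))^(1/(m:ℝ))
      ≤ ENNReal.ofReal (4/(1-(m:ℝ)*δ)) * (T^δ * (P / T)^(1/(m:ℝ))) := by
  have hm' : (m:ℝ) ≠ 0 := Nat.cast_ne_zero.2 hm.ne'
  set F : ℝ≥0∞ → ℝ≥0∞ := fun τ => τ^δ * (P/τ)^(1/(m:ℝ)) with hF
  have h2m0 : ((2:ℝ≥0∞)^m) ≠ 0 := pow_ne_zero _ two_ne_zero
  have h2mt : ((2:ℝ≥0∞)^m) ≠ ⊤ := ENNReal.pow_ne_top ENNReal.ofNat_ne_top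
  have h2m1m : ((2:ℝ≥0∞)^m) ^ (1/(m:ℝ)) = 2 := by
    rw [← ENNReal.rpow_natCast 2 m, ← ENNReal.rpow_mul, mul_one_div, div_self hm',
      ENNReal.rpow_one]
  have key : ∀ τ : ℝ≥0∞, τ ≠ 0 → τ ≠ ⊤ →
      F ((2:ℝ≥0∞)^m * τ) = ((2:ℝ≥0∞)^m)^δ * 2⁻¹ * F τ := by
    intro τ hτ0 hτt
    have e1 : ((2:ℝ≥0∞)^m * τ)^δ = ((2:ℝ≥0∞)^m)^δ * τ^δ :=
      ENNReal.mul_rpow_of_ne_top h2mt hτt δ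
    have e2 : P / ((2:ℝ≥0∞)^m * τ) = (P/τ) * ((2:ℝ≥0∞)^m)⁻¹ := by
      rw [div_eq_mul_inv, div_eq_mul_inv, ENNReal.mul_inv (Or.inl h2m0) (Or.inl h2mt)]
      ring
    have e3 : ((P/τ) * ((2:ℝ≥0∞)^m)⁻¹)^(1/(m:ℝ))
        = (P/τ)^(1/(m:ℝ)) * (2:ℝ≥0∞)⁻¹ := by
      rw [ENNReal.mul_rpow_of_ne_top (ENNReal.div_lt_top hPt hτ0).ne
        (ENNReal.inv_ne_top.2 h2m0), ENNReal.inv_rpow, h2m1m]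
    simp only [hF, e1, e2, e3]
    ring
  have hFk : ∀ k : ℕ, F ((2:ℝ≥0∞)^(m*k) * T) = (((2:ℝ≥0∞)^m)^δ * 2⁻¹)^k * F T := by
    intro k
    induction k with
    | zero => simp
    | succ k ih =>
      have e : (2:ℝ≥0∞)^(m*(k+1)) * T = (2:ℝ≥0∞)^m * ((2:ℝ≥0∞)^(m*k) * T) := by
        rw [mul_add, mul_one, pow_add]; ring
      rw [e, key _ (mul_ne_zero (pow_ne_zero _ two_ne_zero) hT0)
        (ENNReal.mul_ne_top (ENNReal.pow_ne_top ENNReal.ofNat_ne_top) hTt), ih, pow_succ]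
      ring
  have hterm : ∀ k : ℕ, ((2:ℝ≥0∞)^(m*(k+1)) * T)^δ * (P / ((2:ℝ≥0∞)^(m*k) * T))^(1/(m:ℝ))
      = (((2:ℝ≥0∞)^m)^δ * 2⁻¹)^k * (((2:ℝ≥0∞)^m)^δ * F T) := by
    intro k
    have e : (2:ℝ≥0∞)^(m*(k+1)) * T = (2:ℝ≥0∞)^m * ((2:ℝ≥0∞)^(m*k) * T) := by
      rw [mul_add, mul_one, pow_add]; ring
    have e1 : ((2:ℝ≥0∞)^(m*(k+1)) * T)^δ
        = ((2:ℝ≥0∞)^m)^δ * ((2:ℝ≥0∞)^(m*k) * T)^δ := by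
      rw [e]
      exact ENNReal.mul_rpow_of_ne_top h2mt
        (ENNReal.mul_ne_top (ENNReal.pow_ne_top ENNReal.ofNat_ne_top) hTt) δ
    calc ((2:ℝ≥0∞)^(m*(k+1)) * T)^δ * (P / ((2:ℝ≥0∞)^(m*k) * T))^(1/(m:ℝ))
        = ((2:ℝ≥0∞)^m)^δ * F ((2:ℝ≥0∞)^(m*k) * T) := by rw [e1, hF]; ring
      _ = (((2:ℝ≥0∞)^m)^δ * 2⁻¹)^k * (((2:ℝ≥0∞)^m)^δ * F T) := by rw [hFk k]; ring
  rw [tsum_congr hterm, ENNReal.tsum_mul_right]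
  have hρ : (((2:ℝ≥0∞)^m)^δ * 2⁻¹) = (2:ℝ≥0∞) ^ (-(1-(m:ℝ)*δ)) := by
    rw [← ENNReal.rpow_natCast 2 m, ← ENNReal.rpow_mul, ← ENNReal.rpow_neg_one 2,
      ← ENNReal.rpow_add _ _ two_ne_zero ENNReal.ofNat_ne_top]
    ring_nf
  have hgeom : ∑' k : ℕ, (((2:ℝ≥0∞)^m)^δ * 2⁻¹)^k ≤ ENNReal.ofReal (2/(1-(m:ℝ)*δ)) := by
    rw [hρ]
    exact tsum_pow_two_neg (by linarith) (by have : (0:ℝ) ≤ (m:ℝ)*δ := mul_nonneg (by positivity) hδ0.le; linarith)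
  have h2mδ : ((2:ℝ≥0∞)^m)^δ ≤ 2 := by
    rw [← ENNReal.rpow_natCast 2 m, ← ENNReal.rpow_mul]
    calc (2:ℝ≥0∞) ^ ((m:ℝ)*δ) ≤ (2:ℝ≥0∞) ^ (1:ℝ) :=
          ENNReal.rpow_le_rpow_of_exponent_le one_le_two hδ1.le
      _ = 2 := ENNReal.rpow_one 2
  calc (∑' k : ℕ, (((2:ℝ≥0∞)^m)^δ * 2⁻¹)^k) * (((2:ℝ≥0∞)^m)^δ * F T)
      ≤ ENNReal.ofReal (2/(1-(m:ℝ)*δ)) * (2 * F T) :=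
        mul_le_mul' hgeom (mul_le_mul_left h2mδ _)
    _ = ENNReal.ofReal (4/(1-(m:ℝ)*δ)) * F T := by
        rw [← mul_assoc]
        congr 1
        rw [show (2:ℝ≥0∞) = ENNReal.ofReal 2 by simp,
          ← ENNReal.ofReal_mul (div_nonneg (by norm_num) (by linarith))]
        congr 1
        ring

end CR

namespace CR
variable {n : ℕ}

set_option maxHeartbeats 4000000 in
lemma majorant {m : ℕ} (hn : 0 < n) (hm : 0 < m) {δ : ℝ} (hδ0 : 0 < δ) (hδ1 : (m:ℝ)*δ < 1)
    (f : Fin m → (Fin n → ℝ) → ℝ) (hf : ∀ i, LocallyIntegrable (f i) volume)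
    (a : Fin n → ℝ) {h : ℝ} (hh : 0 < h) :
    ∃ M : (Fin n → ℝ) → ℝ≥0∞, Measurable M ∧
      (∀ x : Fin n → ℝ,
        (⨆ (R : Set (Fin n → ℝ)) (_ : IsCube R ∧ x ∈ R ∧ R ⊆ cube (fun i => a i - 2*h) (5*h)),
          ∏ i, lavg (fun y => ENNReal.ofReal |f i y|) R) ^ δ ≤ M x) ∧
      ∫⁻ x in cube a h, M x ≤
        (ENNReal.ofReal ((8:ℝ)^n) + ENNReal.ofReal ((4:ℝ)^(n+1)) * ENNReal.ofReal (1/(1-(m:ℝ)*δ)))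
          * ((∏ i, ∫⁻ y in cube (fun i => a i - 2*h) (5*h), ENNReal.ofReal |f i y|)
              / volume (cube a h) ^ m) ^ δ * volume (cube a h) := by
  classical
  have hm' : (m:ℝ) ≠ 0 := Nat.cast_ne_zero.2 hm.ne'
  set g : Fin m → (Fin n → ℝ) → ℝ≥0∞ := fun i y => ENNReal.ofReal |f i y| with hg
  set Qs : Set (Fin n → ℝ) := cube (fun i => a i - 2*h) (5*h) with hQs
  set P : ℝ≥0∞ := ∏ i, ∫⁻ y in Qs, g i y with hP
  set V : ℝ≥0∞ := volume (cube a h) with hV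
  have hV0 : V ≠ 0 := volume_cube_pos a hh
  have hVt : V ≠ ⊤ := volume_cube_ne_top a h
  have hAt : ∀ i, (∫⁻ y in Qs, g i y) ≠ ⊤ := by
    intro i
    have hK : IsCompact (Set.univ.pi fun j => Set.Icc (a j - 2*h) (a j - 2*h + 5*h)) :=
      isCompact_univ_pi fun j => isCompact_Icc
    have hint := (hf i).integrableOn_isCompact hK
    have hfin := hint.2
    rw [MeasureTheory.hasFiniteIntegral_iff_norm] at hfin
    have hsub : Qs ⊆ Set.univ.pi fun j => Set.Icc (a j - 2*h) (a j - 2*h + 5*h) := by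
      intro y hy
      rw [hQs, mem_cube] at hy
      rw [Set.mem_univ_pi]
      intro j
      exact ⟨(hy j).1, ((hy j).2).le⟩
    have : (∫⁻ y in Qs, g i y) ≤ ∫⁻ y in Set.univ.pi fun j => Set.Icc (a j - 2*h) (a j - 2*h + 5*h), g i y :=
      lintegral_mono_set hsub
    refine (lt_of_le_of_lt this ?_).ne
    have : ∀ y, g i y = ENNReal.ofReal ‖f i y‖ := by
      intro y; rw [hg]; simp [Real.norm_eq_abs]
    simp only [this]
    exact hfin
  by_cases hP0 : P = 0
  · refine ⟨fun _ => 0, measurable_const, ?_, by simp⟩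
    intro x
    have hsup : (⨆ (R : Set (Fin n → ℝ)) (_ : IsCube R ∧ x ∈ R ∧ R ⊆ Qs),
        ∏ i, lavg (g i) R) = 0 := by
      refine le_antisymm (iSup₂_le fun R hR => ?_) zero_le
      obtain ⟨i0, -, hi0⟩ := Finset.prod_eq_zero_iff.1 hP0
      refine le_of_eq (Finset.prod_eq_zero (Finset.mem_univ i0) ?_)
      rw [lavg]
      have : (∫⁻ y in R, g i0 y) = 0 :=
        le_antisymm (le_trans (lintegral_mono_set hR.2.2) (le_of_eq hi0)) zero_le
      rw [this, ENNReal.zero_div]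
    rw [hsup, ENNReal.zero_rpow_of_pos hδ0]
  · have hPt : P ≠ ⊤ := by
      rw [hP]
      exact (ENNReal.prod_lt_top fun i _ => (hAt i).lt_top).ne
    set c8 : ℝ≥0∞ := ENNReal.ofReal ((8:ℝ)^(n*m)) with hc8
    have hc80 : c8 ≠ 0 := (ENNReal.ofReal_pos.2 (by positivity)).ne'
    have hc8t : c8 ≠ ⊤ := ENNReal.ofReal_ne_top
    set E : ℝ≥0∞ := P / V^m with hE
    have hE0 : E ≠ 0 := by
      rw [hE]
      simp [ENNReal.div_eq_zero_iff, hP0, ENNReal.pow_ne_top hVt]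
    have hEt : E ≠ ⊤ := (ENNReal.div_lt_top hPt (pow_ne_zero _ hV0)).ne
    set T : ℝ≥0∞ := c8 * E with hT
    have hT0 : T ≠ 0 := mul_ne_zero hc80 hE0
    have hTt : T ≠ ⊤ := ENNReal.mul_ne_top hc8t hEt
    have ht0 : ∀ k : ℕ, ((2:ℝ≥0∞)^(m*k) * T) ≠ 0 :=
      fun k => mul_ne_zero (pow_ne_zero _ two_ne_zero) hT0
    have htt : ∀ k : ℕ, ((2:ℝ≥0∞)^(m*k) * T) ≠ ⊤ :=
      fun k => ENNReal.mul_ne_top (ENNReal.pow_ne_top ENNReal.ofNat_ne_top) hTt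
    choose U hUmeas hUsub hUvol using fun k : ℕ =>
      weak_type hn hm f (fun i => a i - 2*h) (by linarith : (0:ℝ) < 5*h) (ht0 k) (htt k)
    refine ⟨fun x => T^δ + ∑' k, (U k).indicator (fun _ => (((2:ℝ≥0∞)^(m*(k+1)) * T))^δ) x,
      measurable_const.add (Measurable.ennreal_tsum fun k => measurable_const.indicator (hUmeas k)),
      ?_, ?_⟩
    · -- pointwise bound
      intro x
      set Gx : ℝ≥0∞ := ⨆ (R : Set (Fin n → ℝ)) (_ : IsCube R ∧ x ∈ R ∧ R ⊆ Qs),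
        ∏ i, lavg (g i) R with hGx
      rcases le_or_gt Gx T with hle | hlt
      · exact le_trans (ENNReal.rpow_le_rpow hle hδ0.le) le_self_add
      rcases eq_or_ne Gx ⊤ with htop | hne
      · have hxU : ∀ k : ℕ, x ∈ U k := by
          intro k
          refine hUsub k ?_
          rw [Set.mem_setOf_eq, ← hGx, htop]
          exact (htt k).lt_top
        have hTδ0 : T^δ ≠ 0 := (ENNReal.rpow_pos (pos_iff_ne_zero.2 hT0) hTt).ne'
        have htsum : (∑' k : ℕ, (U k).indicator
            (fun _ => (((2:ℝ≥0∞)^(m*(k+1)) * T))^δ) x) = ⊤ := by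
          refine top_unique ?_
          calc (⊤:ℝ≥0∞) = ∑' _ : ℕ, T^δ := (ENNReal.tsum_const_eq_top_of_ne_zero hTδ0).symm
            _ ≤ _ := by
                refine ENNReal.tsum_le_tsum fun k => ?_
                rw [Set.indicator_of_mem (hxU k)]
                refine ENNReal.rpow_le_rpow ?_ hδ0.le
                exact le_mul_of_one_le_left zero_le (one_le_pow_of_one_le' one_le_two _)
        show Gx^δ ≤ T^δ + ∑' k, (U k).indicator (fun _ => (((2:ℝ≥0∞)^(m*(k+1)) * T))^δ) x
        rw [htsum, add_top]
        exact le_top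
      · have hdivt : Gx / T ≠ ⊤ := (ENNReal.div_lt_top hne hT0).ne
        obtain ⟨N, hN⟩ := ENNReal.exists_nat_gt hdivt
        have hex : ∃ j : ℕ, Gx ≤ (2:ℝ≥0∞)^(m*(j+1)) * T := by
          refine ⟨N, ?_⟩
          have h1 : Gx / T ≤ (2:ℝ≥0∞)^(m*(N+1)) := by
            refine hN.le.trans ?_
            calc ((N:ℝ≥0∞)) ≤ (2:ℝ≥0∞)^N := by
                  have := (Nat.lt_two_pow_self (n := N)).le
                  exact_mod_cast this
              _ ≤ (2:ℝ≥0∞)^(m*(N+1)) := by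
                  refine pow_le_pow_right₀ one_le_two ?_
                  calc N ≤ N+1 := Nat.le_succ _
                    _ ≤ m*(N+1) := Nat.le_mul_of_pos_left _ hm
          rw [ENNReal.div_le_iff hT0 hTt] at h1
          exact h1
        set k := Nat.find hex with hkdef
        have hk1 : Gx ≤ (2:ℝ≥0∞)^(m*(k+1)) * T := Nat.find_spec hex
        have hk2 : (2:ℝ≥0∞)^(m*k) * T < Gx := by
          rcases Nat.eq_zero_or_pos k with h0 | hpos
          · rw [h0]
            simpa using hlt
          · have hmin := Nat.find_min hex (Nat.pred_lt hpos.ne')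
            push_neg at hmin
            have hpos' : 0 < Nat.find hex := hpos
            have hEq : (Nat.find hex).pred + 1 = Nat.find hex := Nat.succ_pred_eq_of_pos hpos'
            rw [hEq] at hmin
            exact hmin
        have hxU : x ∈ U k := by
          refine hUsub k ?_
          rw [Set.mem_setOf_eq, ← hGx]
          exact hk2
        calc Gx^δ ≤ ((2:ℝ≥0∞)^(m*(k+1)) * T)^δ := ENNReal.rpow_le_rpow hk1 hδ0.le
          _ = (U k).indicator (fun _ => (((2:ℝ≥0∞)^(m*(k+1)) * T))^δ) x :=
              (Set.indicator_of_mem hxU (fun _ => (((2:ℝ≥0∞)^(m*(k+1)) * T))^δ)).symm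
          _ ≤ ∑' k', (U k').indicator (fun _ => (((2:ℝ≥0∞)^(m*(k'+1)) * T))^δ) x :=
              ENNReal.le_tsum k
          _ ≤ _ := le_add_self
    · -- integral bound
      have hVm0 : V^m ≠ 0 := pow_ne_zero _ hV0
      have hVmt : V^m ≠ ⊤ := ENNReal.pow_ne_top hVt
      have hPE : V^m * E = P := by rw [hE]; exact ENNReal.mul_div_cancel hVm0 hVmt
      have hPT : P / T = V^m * c8⁻¹ := by
        have h1 : (V^m * c8⁻¹) * T = P := by
          rw [hT]
          calc V^m * c8⁻¹ * (c8 * E) = (V^m * E) * (c8⁻¹ * c8) := by ring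
            _ = P := by rw [ENNReal.inv_mul_cancel hc80 hc8t, mul_one, hPE]
        rw [← h1, mul_div_assoc, ENNReal.div_self hT0 hTt, mul_one]
      have hc81m : c8 ^ (1/(m:ℝ)) = ENNReal.ofReal ((8:ℝ)^n) := by
        rw [hc8, ENNReal.ofReal_rpow_of_pos (by positivity)]
        congr 1
        rw [← Real.rpow_natCast 8 (n*m), ← Real.rpow_mul (by norm_num : (0:ℝ) ≤ 8)]
        rw [← Real.rpow_natCast 8 n]
        congr 1
        push_cast
        field_simp
      have hVmrpow : (V ^ m) ^ (1/(m:ℝ)) = V := by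
        rw [← ENNReal.rpow_natCast V m, ← ENNReal.rpow_mul, mul_one_div, div_self hm',
          ENNReal.rpow_one]
      have hPT1m : (P / T) ^ (1/(m:ℝ)) = V * (ENNReal.ofReal ((8:ℝ)^n))⁻¹ := by
        rw [hPT, ENNReal.mul_rpow_of_ne_top hVmt (ENNReal.inv_ne_top.2 hc80), hVmrpow,
          ENNReal.inv_rpow, hc81m]
      have hTδ : T^δ ≤ ENNReal.ofReal ((8:ℝ)^n) * E^δ := by
        rw [hT, ENNReal.mul_rpow_of_ne_top hc8t hEt]
        refine mul_le_mul_left ?_ _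
        rw [hc8, ENNReal.ofReal_rpow_of_pos (by positivity)]
        refine ENNReal.ofReal_le_ofReal ?_
        rw [← Real.rpow_natCast 8 (n*m), ← Real.rpow_mul (by norm_num : (0:ℝ) ≤ 8),
          ← Real.rpow_natCast 8 n]
        refine Real.rpow_le_rpow_of_exponent_le (by norm_num) ?_
        push_cast
        nlinarith [hδ1, (by positivity : (0:ℝ) ≤ (n:ℝ)), hδ0.le]
      have hmain : T^δ * (P/T)^(1/(m:ℝ)) ≤ E^δ * V := by
        rw [hPT1m]
        calc T^δ * (V * (ENNReal.ofReal ((8:ℝ)^n))⁻¹)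
            ≤ (ENNReal.ofReal ((8:ℝ)^n) * E^δ) * (V * (ENNReal.ofReal ((8:ℝ)^n))⁻¹) :=
              mul_le_mul_left hTδ _
          _ = (E^δ * V) * (ENNReal.ofReal ((8:ℝ)^n) * (ENNReal.ofReal ((8:ℝ)^n))⁻¹) := by ring
          _ ≤ (E^δ * V) * 1 := mul_le_mul_right (ENNReal.mul_inv_le_one _) _
          _ = E^δ * V := mul_one _
      have hstep1 : (∫⁻ x in cube a h,
            (T^δ + ∑' k, (U k).indicator (fun _ => (((2:ℝ≥0∞)^(m*(k+1)) * T))^δ) x))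
          = T^δ * V + ∑' k, (((2:ℝ≥0∞)^(m*(k+1)) * T))^δ * (volume.restrict (cube a h)) (U k) := by
        rw [lintegral_add_left measurable_const]
        congr 1
        · exact setLIntegral_const _ _
        · rw [lintegral_tsum (fun k => (measurable_const.indicator (hUmeas k)).aemeasurable)]
          exact tsum_congr fun k => lintegral_indicator_const (hUmeas k) _
      show (∫⁻ x in cube a h,
            (T^δ + ∑' k, (U k).indicator (fun _ => (((2:ℝ≥0∞)^(m*(k+1)) * T))^δ) x))
          ≤ (ENNReal.ofReal ((8:ℝ)^n) + ENNReal.ofReal ((4:ℝ)^(n+1)) * ENNReal.ofReal (1/(1-(m:ℝ)*δ)))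
            * E ^ δ * V
      rw [hstep1]
      have hseries : (∑' k, (((2:ℝ≥0∞)^(m*(k+1)) * T))^δ * (volume.restrict (cube a h)) (U k))
          ≤ ENNReal.ofReal ((4:ℝ)^n) * (ENNReal.ofReal (4/(1-(m:ℝ)*δ)) * (T^δ * (P/T)^(1/(m:ℝ)))) := by
        calc (∑' k, (((2:ℝ≥0∞)^(m*(k+1)) * T))^δ * (volume.restrict (cube a h)) (U k))
            ≤ ∑' k, (((2:ℝ≥0∞)^(m*(k+1)) * T))^δ *
                (ENNReal.ofReal ((4:ℝ)^n) * (P / ((2:ℝ≥0∞)^(m*k) * T))^(1/(m:ℝ))) := by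
              refine ENNReal.tsum_le_tsum fun k => mul_le_mul_right ?_ _
              refine le_trans (le_trans (Measure.restrict_apply_le _ _) (hUvol k)) (le_of_eq rfl)
          _ = ENNReal.ofReal ((4:ℝ)^n) * ∑' k, (((2:ℝ≥0∞)^(m*(k+1)) * T))^δ *
                (P / ((2:ℝ≥0∞)^(m*k) * T))^(1/(m:ℝ)) := by
              rw [← ENNReal.tsum_mul_left]
              exact tsum_congr fun k => by ring
          _ ≤ _ := mul_le_mul_right (series_bound hm hδ0 hδ1 hT0 hTt hP0 hPt) _
      calc T^δ * V + ∑' k, (((2:ℝ≥0∞)^(m*(k+1)) * T))^δ * (volume.restrict (cube a h)) (U k)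
          ≤ (ENNReal.ofReal ((8:ℝ)^n) * E^δ) * V +
            ENNReal.ofReal ((4:ℝ)^n) * (ENNReal.ofReal (4/(1-(m:ℝ)*δ)) * (E^δ * V)) := by
            refine add_le_add (mul_le_mul_left hTδ _) ?_
            refine hseries.trans (mul_le_mul_right (mul_le_mul_right hmain _) _)
        _ = (ENNReal.ofReal ((8:ℝ)^n) +
              ENNReal.ofReal ((4:ℝ)^n) * ENNReal.ofReal (4/(1-(m:ℝ)*δ))) * E ^ δ * V := by ring
        _ = _ := by
            congr 2
            rw [← ENNReal.ofReal_mul (by positivity),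
              ← ENNReal.ofReal_mul (by positivity : (0:ℝ) ≤ (4:ℝ)^(n+1))]
            congr 1
            rw [pow_succ]
            ring

end CR

namespace CR
variable {n : ℕ}

set_option maxHeartbeats 4000000 in
lemma cube_bound {m : ℕ} (hn : 0 < n) (hm : 0 < m) {δ : ℝ} (hδ0 : 0 < δ) (hδ1 : (m:ℝ)*δ < 1)
    (f : Fin m → (Fin n → ℝ) → ℝ) (hf : ∀ i, LocallyIntegrable (f i) volume)
    (a : Fin n → ℝ) {h : ℝ} (hh : 0 < h) :
    lavg (fun x => multiMax f x ^ δ) (cube a h) *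
      essSup (fun x => (multiMax f x ^ δ)⁻¹) (volume.restrict (cube a h))
      ≤ ENNReal.ofReal ((100:ℝ)^(n+1)) * ENNReal.ofReal (1/(1-(m:ℝ)*δ)) := by
  classical
  have hm' : (m:ℝ) ≠ 0 := Nat.cast_ne_zero.2 hm.ne'
  set g : Fin m → (Fin n → ℝ) → ℝ≥0∞ := fun i y => ENNReal.ofReal |f i y| with hg
  set Qs : Set (Fin n → ℝ) := cube (fun i => a i - 2*h) (5*h) with hQs
  have hQQs : cube a h ⊆ Qs := by
    intro y hy
    rw [mem_cube] at hy
    rw [hQs, mem_cube]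
    intro i
    exact ⟨by linarith [(hy i).1], by linarith [(hy i).2]⟩
  set I : ℝ≥0∞ := ⨅ (y : Fin n → ℝ) (_ : y ∈ cube a h), multiMax f y with hI
  have hJI : (∏ i, lavg (g i) Qs) ≤ I :=
    le_iInf₂ fun y hy => le_multiMax f (isCube_cube _ (by linarith)) (hQQs hy)
  set V : ℝ≥0∞ := volume (cube a h) with hV
  have hV0 : V ≠ 0 := volume_cube_pos a hh
  have hVt : V ≠ ⊤ := volume_cube_ne_top a h
  have hVolQs0 : volume Qs ≠ 0 := volume_cube_pos _ (by linarith)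
  have hVolQst : volume Qs ≠ ⊤ := volume_cube_ne_top _ _
  -- B4 : the normalized product is controlled by the infimum
  have hPfold : (∏ i, ∫⁻ y in Qs, g i y) = volume Qs ^ m * ∏ i, lavg (g i) Qs := by
    calc (∏ i, ∫⁻ y in Qs, g i y)
        = ∏ i, (volume Qs * lavg (g i) Qs) :=
          Finset.prod_congr rfl fun i _ =>
            (ENNReal.mul_div_cancel hVolQs0 hVolQst).symm
      _ = (∏ _i : Fin m, volume Qs) * ∏ i, lavg (g i) Qs := Finset.prod_mul_distrib
      _ = volume Qs ^ m * ∏ i, lavg (g i) Qs := by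
          rw [Finset.prod_const, Finset.card_univ, Fintype.card_fin]
  have hQsV : volume Qs = ENNReal.ofReal 5 ^ n * V := by
    rw [hQs, hV, volume_cube, volume_cube, ← mul_pow, ← ENNReal.ofReal_mul (by norm_num)]
  have hEJ : (∏ i, ∫⁻ y in Qs, g i y) / V^m = (ENNReal.ofReal 5 ^ n)^m * ∏ i, lavg (g i) Qs := by
    rw [hPfold, hQsV, mul_pow]
    have : (ENNReal.ofReal 5 ^ n)^m * V^m * ∏ i, lavg (g i) Qs
        = ((ENNReal.ofReal 5 ^ n)^m * ∏ i, lavg (g i) Qs) * V^m := by ring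
    rw [this, mul_div_assoc, ENNReal.div_self (pow_ne_zero _ hV0) (ENNReal.pow_ne_top hVt),
      mul_one]
  have hB4 : ((∏ i, ∫⁻ y in Qs, g i y) / V^m)^δ ≤ ENNReal.ofReal ((5:ℝ)^n) * I^δ := by
    rw [hEJ, ENNReal.mul_rpow_of_nonneg _ _ hδ0.le]
    refine mul_le_mul' ?_ (ENNReal.rpow_le_rpow hJI hδ0.le)
    have e : (ENNReal.ofReal 5 ^ n)^m = ENNReal.ofReal ((5:ℝ)^(n*m)) := by
      rw [← pow_mul, ← ENNReal.ofReal_pow (by norm_num)]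
    rw [e, ENNReal.ofReal_rpow_of_pos (by positivity)]
    refine ENNReal.ofReal_le_ofReal ?_
    rw [← Real.rpow_natCast 5 (n*m), ← Real.rpow_mul (by norm_num), ← Real.rpow_natCast 5 n]
    refine Real.rpow_le_rpow_of_exponent_le (by norm_num) ?_
    push_cast
    nlinarith [hδ1, hδ0.le, (by positivity : (0:ℝ) ≤ (n:ℝ))]
  -- essSup bound
  have hess : essSup (fun x => (multiMax f x ^ δ)⁻¹) (volume.restrict (cube a h)) ≤ (I^δ)⁻¹ := by
    refine essSup_le_of_ae_le _ ?_
    refine Filter.Eventually.mono (ae_restrict_mem measurableSet_cube) ?_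
    intro x hx
    refine ENNReal.inv_le_inv.2 (ENNReal.rpow_le_rpow ?_ hδ0.le)
    exact iInf₂_le x hx
  -- pointwise splitting
  obtain ⟨M, hMmeas, hMpt, hMint⟩ := majorant hn hm hδ0 hδ1 f hf a hh
  set KF : ℝ≥0∞ := (ENNReal.ofReal ((3/2:ℝ)^n))^m with hKF
  have hsplit : ∀ x ∈ cube a h, multiMax f x ≤
      (⨆ (R : Set (Fin n → ℝ)) (_ : IsCube R ∧ x ∈ R ∧ R ⊆ Qs), ∏ i, lavg (g i) R)
        ⊔ (KF * I) := by
    intro x hx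
    rw [multiMax]
    refine iSup₂_le fun R hR => iSup_le fun hxR => ?_
    obtain ⟨b, r, hr, rfl⟩ := hR
    by_cases hsub : cube b r ⊆ Qs
    · refine le_sup_of_le_left ?_
      exact le_iSup₂_of_le (cube b r) ⟨isCube_cube b hr, hxR, hsub⟩ le_rfl
    · refine le_sup_of_le_right ?_
      obtain ⟨R', hR'c, hQR', hbound⟩ := far_lemma f hh hr hx hxR hsub
      refine hbound.trans (mul_le_mul_right ?_ _)
      exact le_iInf₂ fun y hy => le_multiMax f hR'c (hQR' hy)
  have hrpow_sup : ∀ (u v : ℝ≥0∞), (u ⊔ v)^δ ≤ u^δ + v^δ := by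
    intro u v
    rcases le_total u v with huv | huv
    · rw [sup_eq_right.2 huv]; exact le_add_self
    · rw [sup_eq_left.2 huv]; exact le_self_add
  have hpt : ∀ x ∈ cube a h, multiMax f x ^ δ ≤ M x + (KF * I)^δ := by
    intro x hx
    calc multiMax f x ^ δ
        ≤ ((⨆ (R : Set (Fin n → ℝ)) (_ : IsCube R ∧ x ∈ R ∧ R ⊆ Qs), ∏ i, lavg (g i) R)
            ⊔ (KF * I))^δ := ENNReal.rpow_le_rpow (hsplit x hx) hδ0.le
      _ ≤ (⨆ (R : Set (Fin n → ℝ)) (_ : IsCube R ∧ x ∈ R ∧ R ⊆ Qs), ∏ i, lavg (g i) R)^δ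
            + (KF * I)^δ := hrpow_sup _ _
      _ ≤ M x + (KF * I)^δ := add_le_add_left (hMpt x) _
  have hKF1 : (1:ℝ≥0∞) ≤ ENNReal.ofReal ((3/2:ℝ)^n) :=
    ENNReal.one_le_ofReal.2 (one_le_pow₀ (by norm_num))
  have hfar : (KF * I)^δ ≤ ENNReal.ofReal ((3/2:ℝ)^n) * I^δ := by
    rw [ENNReal.mul_rpow_of_nonneg _ _ hδ0.le]
    refine mul_le_mul_left ?_ _
    rw [hKF, ← ENNReal.rpow_natCast (ENNReal.ofReal ((3/2:ℝ)^n)) m, ← ENNReal.rpow_mul]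
    calc (ENNReal.ofReal ((3/2:ℝ)^n)) ^ ((m:ℝ)*δ)
        ≤ (ENNReal.ofReal ((3/2:ℝ)^n)) ^ (1:ℝ) :=
          ENNReal.rpow_le_rpow_of_exponent_le hKF1 hδ1.le
      _ = _ := ENNReal.rpow_one _
  -- integral bound
  have hint : (∫⁻ x in cube a h, multiMax f x ^ δ) ≤
      (ENNReal.ofReal ((8:ℝ)^n) + ENNReal.ofReal ((4:ℝ)^(n+1)) * ENNReal.ofReal (1/(1-(m:ℝ)*δ)))
        * (ENNReal.ofReal ((5:ℝ)^n) * I^δ) * V + ENNReal.ofReal ((3/2:ℝ)^n) * I^δ * V := by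
    calc (∫⁻ x in cube a h, multiMax f x ^ δ)
        ≤ ∫⁻ x in cube a h, (M x + (KF * I)^δ) := setLIntegral_mono' measurableSet_cube hpt
      _ = (∫⁻ x in cube a h, M x) + (KF * I)^δ * V := by
          rw [lintegral_add_right _ measurable_const, setLIntegral_const]
      _ ≤ (ENNReal.ofReal ((8:ℝ)^n) + ENNReal.ofReal ((4:ℝ)^(n+1)) * ENNReal.ofReal (1/(1-(m:ℝ)*δ)))
            * (ENNReal.ofReal ((5:ℝ)^n) * I^δ) * V + ENNReal.ofReal ((3/2:ℝ)^n) * I^δ * V := by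
          refine add_le_add ?_ (mul_le_mul_left hfar _)
          refine hMint.trans ?_
          exact mul_le_mul_left (mul_le_mul_right hB4 _) _
  set D : ℝ≥0∞ := ENNReal.ofReal (1/(1-(m:ℝ)*δ)) with hD
  have hD1 : (1:ℝ≥0∞) ≤ D := by
    rw [hD, ENNReal.one_le_ofReal]
    rw [le_div_iff₀ (by linarith)]
    nlinarith [mul_nonneg (Nat.cast_nonneg m : (0:ℝ) ≤ (m:ℝ)) hδ0.le]
  have hcoef : (ENNReal.ofReal ((8:ℝ)^n) + ENNReal.ofReal ((4:ℝ)^(n+1)) * D)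
        * ENNReal.ofReal ((5:ℝ)^n) + ENNReal.ofReal ((3/2:ℝ)^n)
      ≤ ENNReal.ofReal ((100:ℝ)^(n+1)) * D := by
    calc (ENNReal.ofReal ((8:ℝ)^n) + ENNReal.ofReal ((4:ℝ)^(n+1)) * D)
          * ENNReal.ofReal ((5:ℝ)^n) + ENNReal.ofReal ((3/2:ℝ)^n)
        ≤ (ENNReal.ofReal ((8:ℝ)^n) * D + ENNReal.ofReal ((4:ℝ)^(n+1)) * D)
          * ENNReal.ofReal ((5:ℝ)^n) + ENNReal.ofReal ((3/2:ℝ)^n) * D := by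
          refine add_le_add (mul_le_mul_left (add_le_add_left
            (le_mul_of_one_le_right zero_le hD1) _) _)
            (le_mul_of_one_le_right zero_le hD1)
      _ = ((ENNReal.ofReal ((8:ℝ)^n) + ENNReal.ofReal ((4:ℝ)^(n+1)))
            * ENNReal.ofReal ((5:ℝ)^n) + ENNReal.ofReal ((3/2:ℝ)^n)) * D := by ring
      _ ≤ ENNReal.ofReal ((100:ℝ)^(n+1)) * D := by
          refine mul_le_mul_left ?_ _
          rw [← ENNReal.ofReal_add (by positivity) (by positivity),
            ← ENNReal.ofReal_mul (by positivity),
            ← ENNReal.ofReal_add (by positivity) (by positivity)]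
          refine ENNReal.ofReal_le_ofReal ?_
          have e1 : (8:ℝ)^n * 5^n = 40^n := by rw [← mul_pow]; norm_num
          have e2 : (4:ℝ)^n * 5^n = 20^n := by rw [← mul_pow]; norm_num
          have h2 : (40:ℝ)^n ≤ (100:ℝ)^n := pow_le_pow_left₀ (by norm_num) (by norm_num) n
          have h3 : (20:ℝ)^n ≤ (100:ℝ)^n := pow_le_pow_left₀ (by norm_num) (by norm_num) n
          have h4 : ((3:ℝ)/2)^n ≤ (100:ℝ)^n := pow_le_pow_left₀ (by norm_num) (by norm_num) n
          calc ((8:ℝ)^n + 4^(n+1)) * 5^n + (3/2)^n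
              = 8^n*5^n + 4*((4:ℝ)^n*5^n) + (3/2)^n := by rw [pow_succ]; ring
            _ = (40:ℝ)^n + 4*(20:ℝ)^n + (3/2)^n := by rw [e1, e2]
            _ ≤ (100:ℝ)^n + 4*(100:ℝ)^n + (100:ℝ)^n :=
                add_le_add (add_le_add h2 (by linarith)) h4
            _ ≤ (100:ℝ)^(n+1) := by
                rw [pow_succ]
                nlinarith [pow_nonneg (by norm_num : (0:ℝ) ≤ 100) n]
  have hlavg : lavg (fun x => multiMax f x ^ δ) (cube a h)
      ≤ ENNReal.ofReal ((100:ℝ)^(n+1)) * D * I^δ := by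
    rw [lavg, ENNReal.div_le_iff hV0 hVt]
    refine hint.trans ?_
    calc (ENNReal.ofReal ((8:ℝ)^n) + ENNReal.ofReal ((4:ℝ)^(n+1)) * D)
          * (ENNReal.ofReal ((5:ℝ)^n) * I^δ) * V + ENNReal.ofReal ((3/2:ℝ)^n) * I^δ * V
        = ((ENNReal.ofReal ((8:ℝ)^n) + ENNReal.ofReal ((4:ℝ)^(n+1)) * D)
            * ENNReal.ofReal ((5:ℝ)^n) + ENNReal.ofReal ((3/2:ℝ)^n)) * I^δ * V := by ring
      _ ≤ ENNReal.ofReal ((100:ℝ)^(n+1)) * D * I^δ * V := by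
          exact mul_le_mul_left (mul_le_mul_left hcoef _) _
  calc lavg (fun x => multiMax f x ^ δ) (cube a h) *
        essSup (fun x => (multiMax f x ^ δ)⁻¹) (volume.restrict (cube a h))
      ≤ (ENNReal.ofReal ((100:ℝ)^(n+1)) * D * I^δ) * (I^δ)⁻¹ := mul_le_mul' hlavg hess
    _ = ENNReal.ofReal ((100:ℝ)^(n+1)) * D * (I^δ * (I^δ)⁻¹) := by ring
    _ ≤ ENNReal.ofReal ((100:ℝ)^(n+1)) * D * 1 :=
        mul_le_mul_right (ENNReal.mul_inv_le_one _) _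
    _ = ENNReal.ofReal ((100:ℝ)^(n+1)) * D := mul_one _

end CR



/-- Multilinear Coifman–Rochberg: for `0 < δ < 1/m`, `(ℳ f⃗)^δ ∈ A₁` with
`[(ℳ f⃗)^δ]_{A₁} ≤ c_n/(1 − mδ)`. -/
theorem multilinear_coifman_rochberg (n : ℕ) :
    ∃ c : ℝ, 0 < c ∧
      ∀ (m : ℕ), 0 < m → ∀ δ : ℝ, 0 < δ → δ < 1 / (m : ℝ) →
      ∀ f : Fin m → (Fin n → ℝ) → ℝ, (∀ i, Measurable (f i)) →
        (∀ i, LocallyIntegrable (f i) volume) →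
        (∀ᵐ x, multiMax f x < ⊤) →
        A1Const (fun x => multiMax f x ^ δ) ≤ ENNReal.ofReal (c / (1 - (m : ℝ) * δ)) := by
  refine ⟨(100:ℝ)^(n+1), by positivity, ?_⟩
  intro m hm δ hδ0 hδ1 f _hmeas hloc _hfin
  have hmR : (0:ℝ) < m := Nat.cast_pos.2 hm
  have hδ1' : (m:ℝ)*δ < 1 := by
    rw [lt_div_iff₀ hmR] at hδ1
    linarith
  have hpos : (0:ℝ) < 1 - m*δ := by linarith
  rw [A1Const]
  refine iSup₂_le fun Q hQ => ?_
  obtain ⟨a, h, hh, rfl⟩ := hQ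
  rcases Nat.eq_zero_or_pos n with hn0 | hn
  · subst hn0
    set w : (Fin 0 → ℝ) → ℝ≥0∞ := fun x => multiMax f x ^ δ with hw
    set pt : Fin 0 → ℝ := fun i => i.elim0 with hpt
    have huniq : ∀ x : Fin 0 → ℝ, x = pt := fun x => funext fun i => i.elim0
    have hvol : volume (Set.univ.pi fun i : Fin 0 => Set.Ico (a i) (a i + h)) = 1 := by
      rw [Real.volume_pi_Ico]
      simp
    have hlavg : lavg w (Set.univ.pi fun i : Fin 0 => Set.Ico (a i) (a i + h)) ≤ w pt := by
      rw [lavg, hvol, div_one]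
      have : (∫⁻ x in (Set.univ.pi fun i : Fin 0 => Set.Ico (a i) (a i + h)), w x)
          = ∫⁻ _x in (Set.univ.pi fun i : Fin 0 => Set.Ico (a i) (a i + h)), w pt :=
        lintegral_congr fun x => by rw [huniq x]
      rw [this, setLIntegral_const, hvol, mul_one]
    have hess : essSup (fun x => (w x)⁻¹)
        (volume.restrict (Set.univ.pi fun i : Fin 0 => Set.Ico (a i) (a i + h))) ≤ (w pt)⁻¹ := by
      refine essSup_le_of_ae_le _ (Filter.Eventually.of_forall fun x => ?_)
      rw [huniq x]
    calc lavg w (Set.univ.pi fun i : Fin 0 => Set.Ico (a i) (a i + h)) *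
          essSup (fun x => (w x)⁻¹)
            (volume.restrict (Set.univ.pi fun i : Fin 0 => Set.Ico (a i) (a i + h)))
        ≤ w pt * (w pt)⁻¹ := mul_le_mul' hlavg hess
      _ ≤ 1 := ENNReal.mul_inv_le_one _
      _ ≤ ENNReal.ofReal ((100:ℝ)^(0+1) / (1 - (m:ℝ)*δ)) := by
          rw [ENNReal.one_le_ofReal, le_div_iff₀ hpos]
          have hnn : (0:ℝ) ≤ (m:ℝ) * δ :=
            mul_nonneg (Nat.cast_nonneg m : (0:ℝ) ≤ (m:ℝ)) hδ0.le
          norm_num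
          linarith
  · refine le_trans (CR.cube_bound hn hm hδ0 hδ1' f hloc a hh) ?_
    rw [← ENNReal.ofReal_mul (by positivity)]
    exact ENNReal.ofReal_le_ofReal (le_of_eq (by rw [mul_one_div]))

end
end

section
/- If A, B, C are Young functions with A⁻¹(t) B⁻¹(t) ≤ c₁ C⁻¹(t) for all t ≥ t₀ > 0, then there is c₂ > 0 such that for every cube Q and all measurable f, g, one has ‖fg‖_{C,Q} ≤ c₂ ‖f‖_{A,Q} ‖g‖_{B,Q}. -/
open MeasureTheory Set Filter ENNReal

noncomputable section

structure YoungFunction where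
  toFun : ℝ → ℝ
  continuousOn : ContinuousOn toFun (Set.Ici 0)
  convexOn : ConvexOn ℝ (Set.Ici 0) toFun
  strictMonoOn : StrictMonoOn toFun (Set.Ici 0)
  map_zero : toFun 0 = 0
  tendsto_zero : Tendsto (fun t => toFun t / t) (nhdsWithin 0 (Set.Ioi 0)) (nhds 0)
  tendsto_top : Tendsto (fun t => toFun t / t) atTop atTop

/-- The generalized inverse `Φ⁻¹(t) = inf {s ≥ 0 : Φ(s) > t}`. -/
def geninv (Φ : ℝ → ℝ) (t : ℝ) : ℝ := sInf {s : ℝ | 0 ≤ s ∧ t < Φ s}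

/-- The normalized Luxemburg norm
`‖f‖_{Φ,Q} = inf {λ > 0 : (1/|Q|) ∫_Q Φ(|f|/λ) ≤ 1}` (with value `∞` if no such `λ`). -/
def eLuxNorm {n : ℕ} (Φ : ℝ → ℝ) (Q : Set (Fin n → ℝ)) (f : (Fin n → ℝ) → ℝ) : ℝ≥0∞ :=
  sInf {lam : ℝ≥0∞ | ∃ l : ℝ, 0 < l ∧ lam = ENNReal.ofReal l ∧
    (∫⁻ x in Q, ENNReal.ofReal (Φ (|f x| / l))) ≤ volume Q}

namespace YoungFunction

lemma nonneg (Φ : YoungFunction) {x : ℝ} (hx : 0 ≤ x) : 0 ≤ Φ.toFun x := by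
  rw [← Φ.map_zero]
  exact Φ.strictMonoOn.monotoneOn (self_mem_Ici) hx hx

lemma mono (Φ : YoungFunction) {x y : ℝ} (hx : 0 ≤ x) (hxy : x ≤ y) :
    Φ.toFun x ≤ Φ.toFun y :=
  Φ.strictMonoOn.monotoneOn hx (hx.trans hxy) hxy

lemma tendsto_atTop (Φ : YoungFunction) : Tendsto Φ.toFun atTop atTop := by
  refine tendsto_atTop_mono' _ ?_ Φ.tendsto_top
  filter_upwards [eventually_ge_atTop (1:ℝ)] with t ht
  have h0 : 0 ≤ Φ.toFun t := Φ.nonneg (by linarith)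
  rw [div_le_iff₀ (by linarith)]
  nlinarith

lemma exists_gt (Φ : YoungFunction) (t : ℝ) : ∃ s, 0 ≤ s ∧ t < Φ.toFun s := by
  obtain ⟨s, hs⟩ := (Φ.tendsto_atTop.eventually (eventually_gt_atTop t)).exists_forall_of_atTop
  exact ⟨max s 0, le_max_right _ _, hs _ (le_max_left _ _)⟩

lemma geninv_nonneg (Φ : YoungFunction) (t : ℝ) : 0 ≤ geninv Φ.toFun t :=
  Real.sInf_nonneg (fun _ hs => hs.1)

lemma le_geninv (Φ : YoungFunction) {u t : ℝ} (hu : 0 ≤ u) (h : Φ.toFun u ≤ t) :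
    u ≤ geninv Φ.toFun t := by
  obtain ⟨s', hs'⟩ := Φ.exists_gt t
  refine le_csInf ⟨s', hs'⟩ (fun s hs => ?_)
  by_contra hsu
  push_neg at hsu
  exact absurd (Φ.mono hs.1 hsu.le) (not_le.2 (lt_of_le_of_lt h hs.2))

lemma apply_geninv_le (Φ : YoungFunction) {t : ℝ} (ht : 0 ≤ t) :
    Φ.toFun (geninv Φ.toFun t) ≤ t := by
  set S := {s : ℝ | 0 ≤ s ∧ t < Φ.toFun s} with hS
  obtain ⟨s', hs'⟩ := Φ.exists_gt t
  have hne : S.Nonempty := ⟨s', hs'⟩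
  have hbd : BddBelow S := ⟨0, fun s hs => hs.1⟩
  set s₀ := geninv Φ.toFun t with hs₀
  have hs₀0 : 0 ≤ s₀ := Φ.geninv_nonneg t
  by_contra hc
  push_neg at hc
  have hs₀pos : 0 < s₀ := by
    rcases hs₀0.lt_or_eq with h' | h'
    · exact h'
    · rw [← h', Φ.map_zero] at hc; linarith
  have hcont : ContinuousAt Φ.toFun s₀ :=
    Φ.continuousOn.continuousAt (Ici_mem_nhds hs₀pos)
  have hmem : {s : ℝ | t < Φ.toFun s} ∈ nhds s₀ := hcont (Ioi_mem_nhds hc)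
  have hmem2 : {s : ℝ | 0 < s ∧ t < Φ.toFun s} ∈ nhds s₀ := by
    filter_upwards [hmem, Ioi_mem_nhds hs₀pos] with s h1 h2
    exact ⟨h2, h1⟩
  have : ∃ s < s₀, 0 < s ∧ t < Φ.toFun s := by
    have h3 : ∀ᶠ s in nhdsWithin s₀ (Iio s₀), (0 < s ∧ t < Φ.toFun s) ∧ s < s₀ :=
      (eventually_nhdsWithin_of_eventually_nhds
        (eventually_of_mem hmem2 fun s hs => hs)).and
        (eventually_mem_nhdsWithin.mono fun s hs => hs)
    obtain ⟨s, ⟨hs1, hs2⟩, hs3⟩ := h3.exists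
    exact ⟨s, hs3, hs1, hs2⟩
  obtain ⟨s, hlt, hs1, hs2⟩ := this
  exact absurd (csInf_le hbd ⟨hs1.le, hs2⟩) (not_le.2 hlt)

lemma div_le_self_div (Φ : YoungFunction) {k x : ℝ} (hk : 1 ≤ k) (hx : 0 ≤ x) :
    Φ.toFun (x / k) ≤ Φ.toFun x / k := by
  have hk0 : 0 < k := lt_of_lt_of_le one_pos hk
  have hab : (0:ℝ) ≤ 1 - 1/k := by
    rw [sub_nonneg]
    exact div_le_one_of_le₀ hk (by linarith)
  have key : Φ.toFun ((1-1/k) • (0:ℝ) + (1/k) • x)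
      ≤ (1-1/k) • Φ.toFun 0 + (1/k) • Φ.toFun x :=
    Φ.convexOn.2 self_mem_Ici (mem_Ici.2 hx) hab (by positivity) (by ring)
  simp only [smul_eq_mul, mul_zero, zero_add, Φ.map_zero] at key
  calc Φ.toFun (x / k) = Φ.toFun ((1/k) * x) := by rw [div_eq_inv_mul, one_div]
    _ ≤ (1/k) * Φ.toFun x := key
    _ = Φ.toFun x / k := by ring

lemma measurable_comp (Φ : YoungFunction) {α : Type*} [MeasurableSpace α] {f : α → ℝ}
    (hf : Measurable f) (hf0 : ∀ x, 0 ≤ f x) : Measurable (fun x => Φ.toFun (f x)) := by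
  have hc : Continuous ((Set.Ici (0:ℝ)).restrict Φ.toFun) :=
    continuousOn_iff_continuous_restrict.1 Φ.continuousOn
  exact hc.measurable.comp (hf.subtype_mk : Measurable fun x => (⟨f x, hf0 x⟩ : Set.Ici (0:ℝ)))

end YoungFunction


lemma key_pointwise (A B C : YoungFunction) (c₁ t₀ : ℝ) (hc₁ : 0 < c₁) (ht₀ : 0 < t₀)
    (h : ∀ t : ℝ, t₀ ≤ t → geninv A.toFun t * geninv B.toFun t ≤ c₁ * geninv C.toFun t)
    {u v : ℝ} (hu : 0 ≤ u) (hv : 0 ≤ v) :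
    C.toFun (u * v / c₁) ≤ A.toFun u + B.toFun v + t₀ := by
  have hAu := A.nonneg hu
  have hBv := B.nonneg hv
  have main : ∀ t, t₀ ≤ t → A.toFun u ≤ t → B.toFun v ≤ t → C.toFun (u*v/c₁) ≤ t := by
    intro t htt hA hB
    have h1 : u ≤ geninv A.toFun t := A.le_geninv hu hA
    have h2 : v ≤ geninv B.toFun t := B.le_geninv hv hB
    have h3 : u * v ≤ c₁ * geninv C.toFun t :=
      (mul_le_mul h1 h2 hv (A.geninv_nonneg t)).trans (h t htt)
    have h4 : u * v / c₁ ≤ geninv C.toFun t := by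
      rw [div_le_iff₀ hc₁]
      linarith [mul_comm c₁ (geninv C.toFun t)]
    exact (C.mono (by positivity) h4).trans (C.apply_geninv_le (by linarith))
  rcases le_or_gt t₀ (A.toFun u + B.toFun v) with hcase | hcase
  · have := main (A.toFun u + B.toFun v) hcase (by linarith) (by linarith)
    linarith
  · have := main t₀ le_rfl (by linarith) (by linarith)
    linarith

lemma main_est {n : ℕ} (A B C : YoungFunction) (c₁ t₀ : ℝ) (hc₁ : 0 < c₁) (ht₀ : 0 < t₀)
    (h : ∀ t : ℝ, t₀ ≤ t → geninv A.toFun t * geninv B.toFun t ≤ c₁ * geninv C.toFun t)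
    (Q : Set (Fin n → ℝ)) (f g : (Fin n → ℝ) → ℝ) (hf : Measurable f) (hg : Measurable g)
    {lA lB : ℝ} (hlA : 0 < lA) (hlB : 0 < lB)
    (HA : (∫⁻ x in Q, ENNReal.ofReal (A.toFun (|f x| / lA))) ≤ volume Q)
    (HB : (∫⁻ x in Q, ENNReal.ofReal (B.toFun (|g x| / lB))) ≤ volume Q) :
    (∫⁻ x in Q, ENNReal.ofReal
        (C.toFun (|f x * g x| / (c₁ * (2 + t₀) * lA * lB)))) ≤ volume Q := by
  set k : ℝ := 2 + t₀ with hkdef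
  have hk1 : 1 ≤ k := by simp only [hkdef]; linarith
  have hk0 : 0 < k := by linarith
  -- pointwise inequality
  have pw : ∀ x, k * C.toFun (|f x * g x| / (c₁ * k * lA * lB)) ≤
      A.toFun (|f x| / lA) + B.toFun (|g x| / lB) + t₀ := by
    intro x
    have hu : 0 ≤ |f x| / lA := by positivity
    have hv : 0 ≤ |g x| / lB := by positivity
    have e1 : |f x * g x| / (c₁ * k * lA * lB) = ((|f x|/lA) * (|g x|/lB) / c₁) / k := by
      rw [abs_mul, div_mul_div_comm, div_div, div_div,
        show lA * lB * (c₁ * k) = c₁ * k * lA * lB from by ring]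
    set y : ℝ := (|f x|/lA) * (|g x|/lB) / c₁ with hy
    have hy0 : 0 ≤ y := by positivity
    have h2 : C.toFun (y / k) ≤ C.toFun y / k := C.div_le_self_div hk1 hy0
    have h3 : C.toFun y ≤ A.toFun (|f x|/lA) + B.toFun (|g x|/lB) + t₀ :=
      key_pointwise A B C c₁ t₀ hc₁ ht₀ h hu hv
    rw [e1]
    calc k * C.toFun (y / k) ≤ k * (C.toFun y / k) :=
          mul_le_mul_of_nonneg_left h2 hk0.le
      _ = C.toFun y := by field_simp
      _ ≤ _ := h3
  -- measurability
  have hmw : Measurable fun x => |f x * g x| / (c₁ * k * lA * lB) :=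
    ((hf.mul hg).abs).div_const _
  have hmC : Measurable fun x =>
      ENNReal.ofReal (C.toFun (|f x * g x| / (c₁ * k * lA * lB))) :=
    ENNReal.measurable_ofReal.comp (C.measurable_comp hmw (fun x => by positivity))
  have hmA : Measurable fun x => ENNReal.ofReal (A.toFun (|f x| / lA)) :=
    ENNReal.measurable_ofReal.comp
      (A.measurable_comp (hf.abs.div_const _) (fun x => by positivity))
  have hmB : Measurable fun x => ENNReal.ofReal (B.toFun (|g x| / lB)) :=
    ENNReal.measurable_ofReal.comp
      (B.measurable_comp (hg.abs.div_const _) (fun x => by positivity))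
  -- ENNReal pointwise
  have pw' : ∀ x, ENNReal.ofReal k *
      ENNReal.ofReal (C.toFun (|f x * g x| / (c₁ * k * lA * lB))) ≤
      ENNReal.ofReal (A.toFun (|f x| / lA)) + ENNReal.ofReal (B.toFun (|g x| / lB)) +
        ENNReal.ofReal t₀ := by
    intro x
    rw [← ENNReal.ofReal_mul hk0.le]
    calc ENNReal.ofReal (k * C.toFun (|f x * g x| / (c₁ * k * lA * lB)))
        ≤ ENNReal.ofReal (A.toFun (|f x| / lA) + B.toFun (|g x| / lB) + t₀) :=
          ENNReal.ofReal_le_ofReal (pw x)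
      _ = _ := by
          rw [ENNReal.ofReal_add
              (add_nonneg (A.nonneg (by positivity)) (B.nonneg (by positivity))) ht₀.le,
            ENNReal.ofReal_add (A.nonneg (by positivity)) (B.nonneg (by positivity))]
  have step : ENNReal.ofReal k *
      (∫⁻ x in Q, ENNReal.ofReal (C.toFun (|f x * g x| / (c₁ * k * lA * lB)))) ≤
      ENNReal.ofReal k * volume Q := by
    calc ENNReal.ofReal k * ∫⁻ x in Q, ENNReal.ofReal
            (C.toFun (|f x * g x| / (c₁ * k * lA * lB)))
        = ∫⁻ x in Q, ENNReal.ofReal k *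
            ENNReal.ofReal (C.toFun (|f x * g x| / (c₁ * k * lA * lB))) :=
          (lintegral_const_mul _ hmC).symm
      _ ≤ ∫⁻ x in Q, (ENNReal.ofReal (A.toFun (|f x| / lA)) +
            ENNReal.ofReal (B.toFun (|g x| / lB)) + ENNReal.ofReal t₀) :=
          lintegral_mono (fun x => pw' x)
      _ = (∫⁻ x in Q, (ENNReal.ofReal (A.toFun (|f x| / lA)) +
            ENNReal.ofReal (B.toFun (|g x| / lB)))) + ∫⁻ _x in Q, ENNReal.ofReal t₀ :=
          lintegral_add_right _ measurable_const
      _ = (∫⁻ x in Q, ENNReal.ofReal (A.toFun (|f x| / lA))) +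
            (∫⁻ x in Q, ENNReal.ofReal (B.toFun (|g x| / lB))) +
            ∫⁻ _x in Q, ENNReal.ofReal t₀ := by rw [lintegral_add_left hmA]
      _ ≤ volume Q + volume Q + ENNReal.ofReal t₀ * volume Q := by
          rw [setLIntegral_const]
          exact add_le_add (add_le_add HA HB) le_rfl
      _ = ENNReal.ofReal k * volume Q := by
          rw [hkdef, ENNReal.ofReal_add (by norm_num) ht₀.le]
          rw [show ENNReal.ofReal (2:ℝ) = 2 from by norm_num]
          ring
  exact (ENNReal.mul_le_mul_iff_right (by simp [hk0]) ENNReal.ofReal_ne_top).1 step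


lemma IsCube.volume_ne_top {n : ℕ} {Q : Set (Fin n → ℝ)} (hQ : IsCube Q) :
    volume Q ≠ ⊤ := by
  obtain ⟨a, h, hh, rfl⟩ := hQ
  rw [volume_pi_pi]
  refine (ENNReal.prod_lt_top fun i _ => ?_).ne
  rw [Real.volume_Ico]
  exact ENNReal.ofReal_lt_top

lemma ae_zero_of_eLuxNorm_zero {n : ℕ} (Φ : YoungFunction) {Q : Set (Fin n → ℝ)}
    (hQfin : volume Q ≠ ⊤) {f : (Fin n → ℝ) → ℝ} (hf : Measurable f)
    (h0 : eLuxNorm Φ.toFun Q f = 0) : f =ᵐ[volume.restrict Q] 0 := by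
  have key : ∀ s : ℝ, 0 < s → (volume.restrict Q) {x | s ≤ |f x|} = 0 := by
    intro s hs
    set μE := (volume.restrict Q) {x | s ≤ |f x|} with hμE
    have hμEtop : μE ≠ ⊤ := by
      refine (lt_of_le_of_lt ?_ (lt_of_le_of_ne le_top hQfin)).ne
      calc μE ≤ (volume.restrict Q) Set.univ := measure_mono (subset_univ _)
        _ = volume Q := by simp
    have bound : ∀ K : ℝ, 0 < K → ENNReal.ofReal K * μE ≤ volume Q := by
      intro K hK
      obtain ⟨R, hR⟩ :=
        (Φ.tendsto_atTop.eventually (eventually_ge_atTop K)).exists_forall_of_atTop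
      set R' : ℝ := max R 1 with hR'
      have hR'1 : 1 ≤ R' := le_max_right _ _
      have hR'0 : 0 < R' := lt_of_lt_of_le one_pos hR'1
      have hsR' : 0 < s / R' := by positivity
      have hlt : eLuxNorm Φ.toFun Q f < ENNReal.ofReal (s / R') := by
        rw [h0]; exact ENNReal.ofReal_pos.2 hsR'
      rw [eLuxNorm, sInf_lt_iff] at hlt
      obtain ⟨lam, ⟨l, hl0, rfl, hint⟩, hltl⟩ := hlt
      have hls : l < s / R' := by
        rwa [ENNReal.ofReal_lt_ofReal_iff hsR'] at hltl
      have hRl : R ≤ s / l := by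
        have h1 : l * R' < s := by rwa [← lt_div_iff₀ hR'0]
        have h2 : R' < s / l := by rwa [lt_div_iff₀ hl0, mul_comm]
        exact le_trans (le_trans (le_max_left _ _) h2.le) le_rfl
      have hsub : {x : Fin n → ℝ | s ≤ |f x|} ⊆
          {x | ENNReal.ofReal K ≤ ENNReal.ofReal (Φ.toFun (|f x| / l))} := by
        intro x hx
        have h3 : R ≤ |f x| / l := by
          refine le_trans hRl ?_
          gcongr
          exact hx
        exact ENNReal.ofReal_le_ofReal (hR _ h3)
      have hmeas : AEMeasurable (fun x => ENNReal.ofReal (Φ.toFun (|f x| / l)))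
          (volume.restrict Q) :=
        (ENNReal.measurable_ofReal.comp
          (Φ.measurable_comp (hf.abs.div_const _) (fun x => by positivity))).aemeasurable
      calc ENNReal.ofReal K * μE
          ≤ ENNReal.ofReal K * (volume.restrict Q)
              {x | ENNReal.ofReal K ≤ ENNReal.ofReal (Φ.toFun (|f x| / l))} :=
            mul_le_mul_right (measure_mono hsub) _
        _ ≤ ∫⁻ x in Q, ENNReal.ofReal (Φ.toFun (|f x| / l)) :=
            mul_meas_ge_le_lintegral₀ hmeas _
        _ ≤ volume Q := hint
    by_contra hne
    rw [hμE] at hne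
    set K : ℝ := (volume Q / μE).toReal + 1 with hKdef
    have hK : 0 < K := by positivity
    have h2 : ENNReal.ofReal K ≤ volume Q / μE :=
      (ENNReal.le_div_iff_mul_le (Or.inl hne) (Or.inl hμEtop)).2 (bound K hK)
    have hfin : volume Q / μE ≠ ⊤ := (ENNReal.div_lt_top hQfin hne).ne
    have h3 : volume Q / μE < ENNReal.ofReal K := by
      conv_lhs => rw [← ENNReal.ofReal_toReal hfin]
      exact ENNReal.ofReal_lt_ofReal_iff (by positivity) |>.2 (by simp [hKdef])
    exact absurd h2 (not_le.2 h3)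
  rw [Filter.EventuallyEq, ae_iff]
  have hsub : {x : Fin n → ℝ | ¬ f x = (0 : (Fin n → ℝ) → ℝ) x} ⊆
      ⋃ m : ℕ, {x | (1:ℝ)/(m+1) ≤ |f x|} := by
    intro x hx
    have hx0 : 0 < |f x| := abs_pos.2 (by simpa using hx)
    obtain ⟨m, hm⟩ := exists_nat_one_div_lt hx0
    exact mem_iUnion.2 ⟨m, hm.le⟩
  exact measure_mono_null hsub (measure_iUnion_null fun m => key _ (by positivity))

lemma eLuxNorm_eq_zero_of_ae {n : ℕ} (Φ : YoungFunction) {Q : Set (Fin n → ℝ)}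
    {f : (Fin n → ℝ) → ℝ} (hfg : f =ᵐ[volume.restrict Q] 0) :
    eLuxNorm Φ.toFun Q f = 0 := by
  refine le_antisymm ?_ zero_le
  refine ENNReal.le_of_forall_pos_le_add fun ε hε _ => ?_
  rw [zero_add]
  have hε' : (0:ℝ) < (ε:ℝ) := hε
  have hint : (∫⁻ x in Q, ENNReal.ofReal (Φ.toFun (|f x| / (ε:ℝ)))) = 0 := by
    have hae : ∀ᵐ x ∂(volume.restrict Q),
        ENNReal.ofReal (Φ.toFun (|f x| / (ε:ℝ))) = 0 := by
      filter_upwards [hfg] with x hx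
      simp only [Pi.zero_apply] at hx
      simp [hx, Φ.map_zero]
    rw [lintegral_congr_ae hae, lintegral_zero]
  refine sInf_le ⟨(ε:ℝ), hε', ?_, by rw [hint]; exact zero_le⟩
  rw [ENNReal.ofReal_coe_nnreal]


/-- If `A⁻¹(t) B⁻¹(t) ≤ c₁ C⁻¹(t)` for `t ≥ t₀ > 0`, then
`‖fg‖_{C,Q} ≤ c₂ ‖f‖_{A,Q} ‖g‖_{B,Q}` for every cube `Q`. -/
theorem orlicz_holder_three {n : ℕ} (A B C : YoungFunction)
    (c₁ t₀ : ℝ) (hc₁ : 0 < c₁) (ht₀ : 0 < t₀)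
    (h : ∀ t : ℝ, t₀ ≤ t → geninv A.toFun t * geninv B.toFun t ≤ c₁ * geninv C.toFun t) :
    ∃ c₂ : ℝ, 0 < c₂ ∧
      ∀ (Q : Set (Fin n → ℝ)), IsCube Q →
        ∀ f g : (Fin n → ℝ) → ℝ, Measurable f → Measurable g →
          eLuxNorm C.toFun Q (fun x => f x * g x) ≤
            ENNReal.ofReal c₂ * eLuxNorm A.toFun Q f * eLuxNorm B.toFun Q g := by
  have hc₂ : 0 < c₁ * (2 + t₀) := mul_pos hc₁ (by linarith)
  refine ⟨c₁ * (2 + t₀), hc₂, ?_⟩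
  intro Q hQ f g hf hg
  set c₂ : ℝ := c₁ * (2 + t₀) with hc₂def
  set eA := eLuxNorm A.toFun Q f with heA
  set eB := eLuxNorm B.toFun Q g with heB
  have hoc₂ : ENNReal.ofReal c₂ ≠ 0 := by simp [ENNReal.ofReal_eq_zero, not_le, hc₂]
  by_cases hA0 : eA = 0
  · have hf0 := ae_zero_of_eLuxNorm_zero A hQ.volume_ne_top hf hA0
    have hfg0 : (fun x => f x * g x) =ᵐ[volume.restrict Q] 0 := by
      filter_upwards [hf0] with x hx
      simp only [Pi.zero_apply] at hx ⊢
      simp [hx]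
    rw [eLuxNorm_eq_zero_of_ae C hfg0]
    exact zero_le
  by_cases hB0 : eB = 0
  · have hg0 := ae_zero_of_eLuxNorm_zero B hQ.volume_ne_top hg hB0
    have hfg0 : (fun x => f x * g x) =ᵐ[volume.restrict Q] 0 := by
      filter_upwards [hg0] with x hx
      simp only [Pi.zero_apply] at hx ⊢
      simp [hx]
    rw [eLuxNorm_eq_zero_of_ae C hfg0]
    exact zero_le
  by_cases hAtop : eA = ⊤
  · rw [hAtop, ENNReal.mul_top hoc₂, ENNReal.top_mul hB0]
    exact le_top
  by_cases hBtop : eB = ⊤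
  · rw [hBtop, ENNReal.mul_top (mul_ne_zero hoc₂ hA0)]
    exact le_top
  -- main case
  have claim : ∀ lA : ℝ, 0 < lA →
      (∫⁻ x in Q, ENNReal.ofReal (A.toFun (|f x| / lA))) ≤ volume Q →
      ∀ lB : ℝ, 0 < lB →
      (∫⁻ x in Q, ENNReal.ofReal (B.toFun (|g x| / lB))) ≤ volume Q →
      eLuxNorm C.toFun Q (fun x => f x * g x) ≤
        ENNReal.ofReal c₂ * ENNReal.ofReal lA * ENNReal.ofReal lB := by
    intro lA hlA HA lB hlB HB
    have hmem : ENNReal.ofReal (c₂ * lA * lB) ∈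
        {lam : ℝ≥0∞ | ∃ l : ℝ, 0 < l ∧ lam = ENNReal.ofReal l ∧
          (∫⁻ x in Q, ENNReal.ofReal (C.toFun (|f x * g x| / l))) ≤ volume Q} :=
      ⟨c₂ * lA * lB, by positivity, rfl,
        main_est A B C c₁ t₀ hc₁ ht₀ h Q f g hf hg hlA hlB HA HB⟩
    have hle := sInf_le hmem
    rwa [ENNReal.ofReal_mul (by positivity), ENNReal.ofReal_mul hc₂.le] at hle
  set L := eLuxNorm C.toFun Q (fun x => f x * g x) with hL
  have step1 : ∀ lB : ℝ, 0 < lB →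
      (∫⁻ x in Q, ENNReal.ofReal (B.toFun (|g x| / lB))) ≤ volume Q →
      L ≤ ENNReal.ofReal c₂ * eA * ENNReal.ofReal lB := by
    intro lB hlB HB
    set c' : ℝ≥0∞ := ENNReal.ofReal c₂ * ENNReal.ofReal lB with hc'
    have hc'0 : c' ≠ 0 := mul_ne_zero hoc₂ (by simp [ENNReal.ofReal_eq_zero, not_le, hlB])
    have hc'top : c' ≠ ⊤ := ENNReal.mul_ne_top ENNReal.ofReal_ne_top ENNReal.ofReal_ne_top
    have hdiv : L / c' ≤ eA := by
      rw [heA, eLuxNorm]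
      refine le_sInf fun lam hlam => ?_
      obtain ⟨lA, hlA, rfl, HA⟩ := hlam
      rw [ENNReal.div_le_iff_le_mul (Or.inl hc'0) (Or.inl hc'top)]
      calc L ≤ ENNReal.ofReal c₂ * ENNReal.ofReal lA * ENNReal.ofReal lB :=
            claim lA hlA HA lB hlB HB
        _ = ENNReal.ofReal lA * c' := by rw [hc']; ring
    calc L = L / c' * c' := (ENNReal.div_mul_cancel hc'0 hc'top).symm
      _ ≤ eA * c' := mul_le_mul_left hdiv _
      _ = ENNReal.ofReal c₂ * eA * ENNReal.ofReal lB := by rw [hc']; ring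
  set c'' : ℝ≥0∞ := ENNReal.ofReal c₂ * eA with hc''
  have hc''0 : c'' ≠ 0 := mul_ne_zero hoc₂ hA0
  have hc''top : c'' ≠ ⊤ := ENNReal.mul_ne_top ENNReal.ofReal_ne_top hAtop
  have hdiv2 : L / c'' ≤ eB := by
    rw [heB, eLuxNorm]
    refine le_sInf fun lam hlam => ?_
    obtain ⟨lB, hlB, rfl, HB⟩ := hlam
    rw [ENNReal.div_le_iff_le_mul (Or.inl hc''0) (Or.inl hc''top)]
    calc L ≤ ENNReal.ofReal c₂ * eA * ENNReal.ofReal lB := step1 lB hlB HB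
      _ = ENNReal.ofReal lB * c'' := by rw [hc'']; ring
  calc L = L / c'' * c'' := (ENNReal.div_mul_cancel hc''0 hc''top).symm
    _ ≤ eB * c'' := mul_le_mul_left hdiv2 _
    _ = ENNReal.ofReal c₂ * eA * eB := by rw [hc'']; ring

end
end

section
/- Sparse counting exponential decay: there exist constants c, α > 0 depending only on n and the sparseness constant such that for every η-sparse family 𝒮 of dyadic cubes, every cube Q, and every t > 0, |{x ∈ Q : ∑_{Q' ∈ 𝒮, Q' ⊆ Q} 1_{Q'}(x) > t}| ≤ c e^{−αt} |Q|. -/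
open MeasureTheory Set Filter ENNReal

noncomputable section

/-- An `η`-sparse family of dyadic cubes. -/
def IsSparseDyadic {n : ℕ} (η : ℝ) (𝒮 : Set (Set (Fin n → ℝ))) : Prop :=
  IsSparse η 𝒮 ∧ ∃ 𝒟, IsDyadicGrid 𝒟 ∧ 𝒮 ⊆ 𝒟

namespace SparseAux

variable {X : Type*}

def anc (S : Set (Set X)) (R : Set X) : Set (Set X) := {T ∈ S | R ⊆ T}

def dep (S : Set (Set X)) (R : Set X) : ℕ := (anc S R).ncard

lemma self_mem_anc {S : Set (Set X)} {R : Set X} (hR : R ∈ S) : R ∈ anc S R :=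
  ⟨hR, subset_rfl⟩

lemma one_le_dep {S : Set (Set X)} {R : Set X} (hR : R ∈ S) (hfin : (anc S R).Finite) :
    1 ≤ dep S R := by
  have h1 : (anc S R).Nonempty := ⟨R, self_mem_anc hR⟩
  have h2 := (Set.ncard_pos hfin).mpr h1
  exact h2

lemma dep_lt_dep {S : Set (Set X)} {R R' : Set X} (hR : R ∈ S)
    (hfin : (anc S R).Finite) (hsub : R ⊆ R') (hne : R ≠ R') :
    dep S R' < dep S R := by
  apply Set.ncard_lt_ncard ?_ hfin
  constructor
  · rintro T ⟨hT, hT2⟩; exact ⟨hT, hsub.trans hT2⟩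
  · intro hcon
    have h := hcon (self_mem_anc hR)
    exact hne (subset_antisymm hsub h.2)

lemma exists_dep_eq {S : Set (Set X)}
    (hnest : ∀ A ∈ S, ∀ B ∈ S, A ⊆ B ∨ B ⊆ A ∨ A ∩ B = ∅)
    (hne : ∀ A ∈ S, A.Nonempty)
    (hfin : ∀ R ∈ S, (anc S R).Finite) :
    ∀ d R, R ∈ S → dep S R = d → ∀ k, 1 ≤ k → k ≤ d → ∃ T ∈ S, R ⊆ T ∧ dep S T = k := by
  intro d
  induction d using Nat.strong_induction_on with
  | _ d ih =>
    intro R hR hd k hk1 hkd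
    rcases eq_or_lt_of_le hkd with heq | hlt
    · exact ⟨R, hR, subset_rfl, by omega⟩
    · have hfR := hfin R hR
      have hne2 : (anc S R \ {R}).Nonempty := by
        rw [Set.diff_nonempty]
        intro hcon
        have hd' : (anc S R).ncard = d := hd
        have h1 : (anc S R).ncard ≤ 1 := by
          have := Set.ncard_le_ncard hcon (Set.finite_singleton R)
          simpa using this
        omega
      obtain ⟨M, hM, hmin⟩ := Set.Finite.exists_minimalFor id _ hfR.diff hne2
      obtain ⟨⟨hMS, hRM⟩, hMne⟩ := hM
      have hMne' : M ≠ R := by simpa using hMne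
      have hancM : anc S M = anc S R \ {R} := by
        ext T
        constructor
        · rintro ⟨hTS, hMT⟩
          refine ⟨⟨hTS, hRM.trans hMT⟩, ?_⟩
          simp only [Set.mem_singleton_iff]
          rintro rfl
          exact hMne' (subset_antisymm hMT hRM)
        · rintro ⟨⟨hTS, hRT⟩, hTne⟩
          refine ⟨hTS, ?_⟩
          rcases hnest M hMS T hTS with h | h | h
          · exact h
          · have heq := hmin ⟨⟨hTS, hRT⟩, hTne⟩ h
            exact heq
          · exfalso
            obtain ⟨x, hx⟩ := hne R hR
            have hmem : x ∈ M ∩ T := ⟨hRM hx, hRT hx⟩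
            rw [h] at hmem; exact hmem
      have hdM : dep S M = d - 1 := by
        have h0 : dep S M = (anc S R \ {R}).ncard := by rw [dep, hancM]
        rw [h0, Set.ncard_diff_singleton_of_mem (self_mem_anc hR)]
        rw [show (anc S R).ncard = d from hd]
      have hk2 : k ≤ d - 1 := by omega
      obtain ⟨T, hTS, hMT, hdT⟩ := ih (d-1) (by omega) M hMS hdM k hk1 hk2
      exact ⟨T, hTS, hRM.trans hMT, hdT⟩

lemma disjoint_of_dep_eq {S : Set (Set X)}
    (hnest : ∀ A ∈ S, ∀ B ∈ S, A ⊆ B ∨ B ⊆ A ∨ A ∩ B = ∅)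
    (hfin : ∀ R ∈ S, (anc S R).Finite)
    {R R' : Set X} (hR : R ∈ S) (hR' : R' ∈ S)
    (hne : R ≠ R') (hdep : dep S R = dep S R') : Disjoint R R' := by
  rcases hnest R hR R' hR' with h | h | h
  · have := dep_lt_dep hR (hfin R hR) h hne
    omega
  · have := dep_lt_dep hR' (hfin R' hR') h hne.symm
    omega
  · exact Set.disjoint_iff_inter_eq_empty.mpr h

lemma exists_card_finset {ι : Type*} (f : ι → Set X) (x : X) (t : ℝ) (ht : 0 ≤ t)
    (h : ENNReal.ofReal t < ∑' i, (f i).indicator (fun _ => (1 : ℝ≥0∞)) x) :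
    ∃ T : Finset ι, T.card = ⌊t⌋₊ + 1 ∧ ∀ i ∈ T, x ∈ f i := by
  classical
  by_cases hs : {i | x ∈ f i}.Infinite
  · obtain ⟨T, hTs, hcard⟩ := hs.exists_subset_card_eq (⌊t⌋₊ + 1)
    exact ⟨T, hcard, fun i hi => hTs hi⟩
  · rw [Set.not_infinite] at hs
    have htsum : (∑' i, (f i).indicator (fun _ => (1 : ℝ≥0∞)) x)
        ≤ (hs.toFinset.card : ℝ≥0∞) := by
      rw [tsum_eq_sum (s := hs.toFinset)
        (by intro i hi
            have hx : x ∉ f i := by simpa using hi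
            simp [Set.indicator_of_notMem hx])]
      calc ∑ i ∈ hs.toFinset, (f i).indicator (fun _ => (1:ℝ≥0∞)) x
          ≤ ∑ _i ∈ hs.toFinset, 1 := Finset.sum_le_sum (fun i _ => by
            by_cases hx : x ∈ f i <;> simp [Set.indicator, hx])
        _ = hs.toFinset.card := by simp
    have hlt : ENNReal.ofReal t < (hs.toFinset.card : ℝ≥0∞) := h.trans_le htsum
    have ht' : t < (hs.toFinset.card : ℝ) := by
      by_contra hcon
      push_neg at hcon
      refine absurd hlt (not_lt.mpr ?_)
      rw [← ENNReal.ofReal_natCast]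
      exact ENNReal.ofReal_le_ofReal hcon
    have hk : ⌊t⌋₊ + 1 ≤ hs.toFinset.card := by
      have := (Nat.floor_lt ht).mpr ht'
      omega
    obtain ⟨T, hTsub, hTcard⟩ := Finset.exists_subset_card_eq hk
    refine ⟨T, hTcard, fun i hi => ?_⟩
    have := hTsub hi
    simpa using (hs.mem_toFinset).mp this

end SparseAux

lemma isCube_facts {n : ℕ} {Q : Set (Fin n → ℝ)} (h : IsCube Q) :
    0 < volume Q ∧ volume Q < ⊤ ∧ MeasurableSet Q ∧ Q.Nonempty := by
  obtain ⟨a, hh, hpos, rfl⟩ := h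
  have hvol : volume (Set.univ.pi fun i => Set.Ico (a i) (a i + hh))
      = ENNReal.ofReal hh ^ n := by
    rw [volume_pi_pi]
    simp [Real.volume_Ico]
  refine ⟨?_, ?_, ?_, ?_⟩
  · rw [hvol]; exact ENNReal.pow_pos (ENNReal.ofReal_pos.mpr hpos) n
  · rw [hvol]; exact ENNReal.pow_lt_top ENNReal.ofReal_lt_top
  · exact MeasurableSet.univ_pi (fun i => measurableSet_Ico)
  · exact ⟨a, fun i _ => ⟨le_rfl, lt_add_of_pos_right _ hpos⟩⟩

/-- Exponential decay for the sparse counting function: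
`|{x ∈ Q : ∑_{Q' ∈ 𝒮, Q' ⊆ Q} 1_{Q'}(x) > t}| ≤ c e^{−αt} |Q|`. -/
theorem sparse_counting_exponential_decay (n : ℕ) (η : ℝ) (hη : 0 < η) (hη1 : η ≤ 1) :
    ∃ c α : ℝ, 0 < c ∧ 0 < α ∧
      ∀ (𝒮 : Set (Set (Fin n → ℝ))), IsSparseDyadic η 𝒮 →
      ∀ (Q : Set (Fin n → ℝ)), IsCube Q →
      ∀ t : ℝ, 0 < t →
        volume {x ∈ Q | ENNReal.ofReal t <
            ∑' Q' : {Q' // Q' ∈ 𝒮 ∧ Q' ⊆ Q},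
              (Q' : Set (Fin n → ℝ)).indicator (fun _ => (1 : ℝ≥0∞)) x}
          ≤ ENNReal.ofReal (c * Real.exp (-α * t)) * volume Q := by
  classical
  set m : ℕ := ⌈2 / η⌉₊ with hmdef
  have hm0 : 0 < m := Nat.ceil_pos.mpr (by positivity)
  have hm0' : (0:ℝ) < m := by exact_mod_cast hm0
  refine ⟨2, Real.log 2 / m, by norm_num,
    div_pos (Real.log_pos (by norm_num)) hm0', ?_⟩
  intro 𝒮 h𝒮 Q hQ t ht
  obtain ⟨⟨E, hE, hEdisj⟩, 𝒟, ⟨h𝒟cube, h𝒟nest, h𝒟cnt⟩, h𝒮𝒟⟩ := h𝒮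
  obtain ⟨hQpos, hQtop, hQmeas, hQne⟩ := isCube_facts hQ
  set S : Set (Set (Fin n → ℝ)) := {R | R ∈ 𝒮 ∧ R ⊆ Q} with hSdef
  have hSsub : S ⊆ 𝒮 := fun R hR => hR.1
  have hScnt : S.Countable := h𝒟cnt.mono (hSsub.trans h𝒮𝒟)
  have hScube : ∀ R ∈ S, IsCube R := fun R hR => h𝒟cube R (h𝒮𝒟 (hSsub hR))
  have hSQ : ∀ R ∈ S, R ⊆ Q := fun R hR => hR.2
  have hnest : ∀ A ∈ S, ∀ B ∈ S, A ⊆ B ∨ B ⊆ A ∨ A ∩ B = ∅ :=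
    fun A hA B hB => h𝒟nest A (h𝒮𝒟 (hSsub hA)) B (h𝒮𝒟 (hSsub hB))
  have hSne : ∀ A ∈ S, A.Nonempty := fun A hA => (isCube_facts (hScube A hA)).2.2.2
  have hSpos : ∀ A ∈ S, 0 < volume A := fun A hA => (isCube_facts (hScube A hA)).1
  have hSmeas : ∀ A ∈ S, MeasurableSet A := fun A hA => (isCube_facts (hScube A hA)).2.2.1
  have hEprop : ∀ A ∈ S, E A ⊆ A ∧ MeasurableSet (E A) ∧
      ENNReal.ofReal η * volume A ≤ volume (E A) := fun A hA => hE A (hSsub hA)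
  -- ancestors are finite
  have hfin : ∀ R ∈ S, (SparseAux.anc S R).Finite := by
    intro R hR
    by_contra hinf
    have hinf' : (SparseAux.anc S R).Infinite := hinf
    set a := ENNReal.ofReal η * volume R with ha
    have ha0 : a ≠ 0 := by
      have h1 := hSpos R hR
      have h2 : ENNReal.ofReal η ≠ 0 := by simp [ENNReal.ofReal_eq_zero, not_le, hη]
      exact mul_ne_zero h2 h1.ne'
    have hatop : a ≠ ⊤ := by
      have h1 : volume R ≤ volume Q := measure_mono (hSQ R hR)
      exact ENNReal.mul_ne_top ENNReal.ofReal_ne_top (h1.trans_lt hQtop).ne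
    obtain ⟨N, hN⟩ := ENNReal.exists_nat_gt
      (show volume Q / a ≠ ⊤ from (ENNReal.div_lt_top hQtop.ne ha0).ne)
    have hQN : volume Q < N * a := by
      rw [ENNReal.div_lt_iff (Or.inl ha0) (Or.inl hatop)] at hN
      exact hN
    obtain ⟨T, hTsub, hTcard⟩ := hinf'.exists_subset_card_eq N
    have hTanc : ∀ A ∈ T, A ∈ SparseAux.anc S R := fun A hA => hTsub hA
    have hdisjT : (↑T : Set (Set (Fin n → ℝ))).PairwiseDisjoint E := by
      intro A hA B hB hAB
      exact hEdisj (hSsub (hTanc A hA).1) (hSsub (hTanc B hB).1) hAB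
    have hkey : ∑ A ∈ T, volume (E A) = volume (⋃ A ∈ T, E A) :=
      (measure_biUnion_finset hdisjT (fun A hA => (hEprop A (hTanc A hA).1).2.1)).symm
    have hle : volume (⋃ A ∈ T, E A) ≤ volume Q := by
      refine measure_mono (Set.iUnion₂_subset fun A hA => ?_)
      exact (hEprop A (hTanc A hA).1).1.trans (hSQ A (hTanc A hA).1)
    have hge : (N : ℝ≥0∞) * a ≤ ∑ A ∈ T, volume (E A) := by
      calc (N:ℝ≥0∞) * a = ∑ _A ∈ T, a := by rw [Finset.sum_const, hTcard, nsmul_eq_mul]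
        _ ≤ ∑ A ∈ T, volume (E A) := by
            refine Finset.sum_le_sum fun A hA => ?_
            have hAanc := hTanc A hA
            calc a ≤ ENNReal.ofReal η * volume A :=
                  mul_le_mul_right (measure_mono hAanc.2) _
              _ ≤ volume (E A) := (hEprop A hAanc.1).2.2
    exact absurd (hge.trans (hkey.le.trans hle)) (not_le.mpr hQN)
  have hdepth := SparseAux.exists_dep_eq hnest hSne hfin
  -- level sets
  set D : ℕ → Set (Set (Fin n → ℝ)) := fun k => {R ∈ S | SparseAux.dep S R = k} with hDdef
  set U : ℕ → Set (Fin n → ℝ) := fun k => ⋃ R ∈ D k, R with hUdef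
  set B : ℕ → Set (Fin n → ℝ) := fun k => ⋃ R ∈ D k, E R with hBdef
  have hDS : ∀ k, D k ⊆ S := fun k R hR => hR.1
  have hDcnt : ∀ k, (D k).Countable := fun k => hScnt.mono (hDS k)
  have hDdisj : ∀ k, (D k).PairwiseDisjoint id := by
    intro k R hR R' hR' hne'
    exact SparseAux.disjoint_of_dep_eq hnest hfin (hDS k hR) (hDS k hR') hne'
      (hR.2.trans hR'.2.symm)
  have hUQ : ∀ k, U k ⊆ Q := fun k => Set.iUnion₂_subset fun R hR => hSQ R (hDS k hR)
  have hBU : ∀ k, B k ⊆ U k := by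
    intro k
    show (⋃ R ∈ D k, E R) ⊆ ⋃ R ∈ D k, R
    exact Set.iUnion₂_subset fun R hR =>
      (hEprop R (hDS k hR)).1.trans (Set.subset_biUnion_of_mem (u := fun A => A) hR)
  have hUmono : ∀ k j, 1 ≤ k → k ≤ j → U j ⊆ U k := by
    intro k j hk hkj
    refine Set.iUnion₂_subset fun R hR => ?_
    obtain ⟨T, hTS, hRT, hdT⟩ := hdepth (SparseAux.dep S R) R hR.1 rfl k hk
      (by rw [hR.2]; exact hkj)
    have hgoal : T ⊆ ⋃ A ∈ D k, A :=
      Set.subset_biUnion_of_mem (u := fun A => A) (show T ∈ D k from ⟨hTS, hdT⟩)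
    exact hRT.trans hgoal
  -- step 1 : sparseness per level
  have step1 : ∀ k, ENNReal.ofReal η * volume (U k) ≤ volume (B k) := by
    intro k
    have h1 : volume (U k) = ∑' (R : D k), volume (R : Set (Fin n → ℝ)) :=
      measure_biUnion (hDcnt k) (hDdisj k) (fun R hR => hSmeas R (hDS k hR))
    have h2 : volume (B k) = ∑' (R : D k), volume (E R) :=
      measure_biUnion (hDcnt k)
        (fun R hR R' hR' hne' => hEdisj (hSsub (hDS k hR)) (hSsub (hDS k hR')) hne')
        (fun R hR => (hEprop R (hDS k hR)).2.1)
    rw [h1, h2, ← ENNReal.tsum_mul_left]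
    exact ENNReal.tsum_le_tsum fun R => (hEprop R (hDS k R.2)).2.2
  -- disjointness of the B's
  have hBdisj : ∀ j j', j ≠ j' → Disjoint (B j) (B j') := by
    intro j j' hjj'
    rw [Set.disjoint_left]
    intro x hx hx'
    simp only [hBdef, Set.mem_iUnion, exists_prop] at hx hx'
    obtain ⟨R, hR, hxR⟩ := hx
    obtain ⟨R', hR', hxR'⟩ := hx'
    have hne' : R ≠ R' := by rintro rfl; exact hjj' (hR.2.symm.trans hR'.2)
    exact Set.disjoint_left.mp
      (hEdisj (hSsub (hDS j hR)) (hSsub (hDS j' hR')) hne') hxR hxR'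
  -- step 2 : contraction
  have step2 : ∀ k, 1 ≤ k → 2 * volume (U (k + m)) ≤ volume (U k) := by
    intro k hk
    have hsum : ∑ j ∈ Finset.Icc (k+1) (k+m), volume (B j) ≤ volume (U k) := by
      rw [← measure_biUnion_finset
        (fun j _ j' _ hne' => hBdisj j j' hne')
        (fun j _ => MeasurableSet.biUnion (hDcnt j)
          fun R hR => (hEprop R (hDS j hR)).2.1)]
      refine measure_mono (Set.iUnion₂_subset fun j hj => ?_)
      simp only [Finset.mem_Icc] at hj
      exact (hBU j).trans (hUmono k j hk (by omega))
    have hlow : ∀ j ∈ Finset.Icc (k+1) (k+m),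
        ENNReal.ofReal η * volume (U (k+m)) ≤ volume (B j) := by
      intro j hj
      simp only [Finset.mem_Icc] at hj
      calc ENNReal.ofReal η * volume (U (k+m))
          ≤ ENNReal.ofReal η * volume (U j) :=
            mul_le_mul_right (measure_mono (hUmono j (k+m) (by omega) (by omega))) _
        _ ≤ volume (B j) := step1 j
    have hcard : (Finset.Icc (k+1) (k+m)).card = m := by
      rw [Nat.card_Icc]; omega
    have hmain : (m : ℝ≥0∞) * (ENNReal.ofReal η * volume (U (k+m))) ≤ volume (U k) := by
      calc (m:ℝ≥0∞) * (ENNReal.ofReal η * volume (U (k+m)))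
          = ∑ _j ∈ Finset.Icc (k+1) (k+m), ENNReal.ofReal η * volume (U (k+m)) := by
            rw [Finset.sum_const, hcard, nsmul_eq_mul]
        _ ≤ ∑ j ∈ Finset.Icc (k+1) (k+m), volume (B j) := Finset.sum_le_sum hlow
        _ ≤ volume (U k) := hsum
    have h2m : (2 : ℝ≥0∞) ≤ (m : ℝ≥0∞) * ENNReal.ofReal η := by
      have h1 : (2:ℝ) ≤ (m:ℝ) * η := by
        have h2 : 2 / η ≤ (m:ℝ) := Nat.le_ceil _
        calc (2:ℝ) = (2/η) * η := by field_simp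
          _ ≤ (m:ℝ) * η := mul_le_mul_of_nonneg_right h2 hη.le
      rw [show ((m:ℝ≥0∞)) = ENNReal.ofReal (m:ℝ) from (ENNReal.ofReal_natCast m).symm,
        ← ENNReal.ofReal_mul (by positivity)]
      calc (2:ℝ≥0∞) = ENNReal.ofReal 2 := by simp
        _ ≤ _ := ENNReal.ofReal_le_ofReal h1
    calc 2 * volume (U (k+m)) ≤ ((m:ℝ≥0∞) * ENNReal.ofReal η) * volume (U (k+m)) :=
          mul_le_mul_left h2m _
      _ = (m:ℝ≥0∞) * (ENNReal.ofReal η * volume (U (k+m))) := by ring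
      _ ≤ volume (U k) := hmain
  -- step 3 : iterate
  have step3 : ∀ j : ℕ, 2^j * volume (U (1 + j*m)) ≤ volume Q := by
    intro j
    induction j with
    | zero => simpa using measure_mono (hUQ 1)
    | succ j ihj =>
      have heq : 1 + (j+1)*m = (1 + j*m) + m := by ring
      rw [heq]
      calc 2^(j+1) * volume (U ((1+j*m)+m))
          = 2^j * (2 * volume (U ((1+j*m)+m))) := by ring
        _ ≤ 2^j * volume (U (1+j*m)) := mul_le_mul_right (step2 _ (by omega)) _
        _ ≤ volume Q := ihj
  -- step 4 : inclusion of the level set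
  set k : ℕ := ⌊t⌋₊ + 1 with hkdef
  have hincl : {x ∈ Q | ENNReal.ofReal t <
      ∑' Q' : {Q' // Q' ∈ 𝒮 ∧ Q' ⊆ Q},
        (Q' : Set (Fin n → ℝ)).indicator (fun _ => (1 : ℝ≥0∞)) x} ⊆ U k := by
    rintro x ⟨hxQ, hxt⟩
    obtain ⟨T, hTcard, hTmem⟩ := SparseAux.exists_card_finset
      (fun i : {Q' // Q' ∈ 𝒮 ∧ Q' ⊆ Q} => (i : Set (Fin n → ℝ))) x t ht.le hxt
    set T' : Finset (Set (Fin n → ℝ)) := T.image Subtype.val with hT'def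
    have hT'card : T'.card = k := by
      rw [hT'def, Finset.card_image_of_injective _ Subtype.val_injective, hTcard]
    have hT'S : ∀ A ∈ T', A ∈ S ∧ x ∈ A := by
      intro A hA
      simp only [hT'def, Finset.mem_image] at hA
      obtain ⟨i, hi, rfl⟩ := hA
      exact ⟨i.2, hTmem i hi⟩
    have hT'ne : (↑T' : Set (Set (Fin n → ℝ))).Nonempty := by
      rw [Finset.coe_nonempty]
      exact Finset.card_pos.mp (by omega)
    obtain ⟨R, hRT', hmin⟩ := Set.Finite.exists_minimalFor id
      (↑T' : Set (Set (Fin n → ℝ))) T'.finite_toSet hT'ne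
    have hRS : R ∈ S := (hT'S R hRT').1
    have hxR : x ∈ R := (hT'S R hRT').2
    have hT'anc : (↑T' : Set (Set (Fin n → ℝ))) ⊆ SparseAux.anc S R := by
      intro A hA
      have hAS := hT'S A hA
      refine ⟨hAS.1, ?_⟩
      rcases hnest R hRS A hAS.1 with h | h | h
      · exact h
      · exact hmin hA h
      · exfalso
        have hmem : x ∈ R ∩ A := ⟨hxR, hAS.2⟩
        rw [h] at hmem; exact hmem
    have hdepR : k ≤ SparseAux.dep S R := by
      calc k = T'.card := hT'card.symm
        _ = (↑T' : Set (Set (Fin n → ℝ))).ncard := (Set.ncard_coe_finset T').symm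
        _ ≤ _ := Set.ncard_le_ncard hT'anc (hfin R hRS)
    obtain ⟨Tc, hTcS, hRTc, hdTc⟩ := hdepth _ R hRS rfl k (by omega) hdepR
    have hgoal : x ∈ ⋃ A ∈ D k, A :=
      Set.mem_biUnion (show Tc ∈ D k from ⟨hTcS, hdTc⟩) (hRTc hxR)
    exact hgoal
  -- final assembly
  set j : ℕ := ⌊t⌋₊ / m with hjdef
  have h2 : U k ⊆ U (1 + j*m) := by
    refine hUmono (1 + j*m) k (by omega) ?_
    have hjm : j * m ≤ ⌊t⌋₊ := by rw [hjdef]; exact Nat.div_mul_le_self _ _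
    omega
  have h3 : volume (U (1 + j*m)) ≤ volume Q / 2^j := by
    rw [ENNReal.le_div_iff_mul_le (Or.inl (pow_ne_zero j two_ne_zero))
      (Or.inl (ENNReal.pow_ne_top ENNReal.ofNat_ne_top))]
    rw [mul_comm]
    exact step3 j
  have h4 : volume Q / 2^j ≤ ENNReal.ofReal (2 * Real.exp (-(Real.log 2 / m) * t)) * volume Q := by
    rw [ENNReal.div_eq_inv_mul]
    apply mul_le_mul_left
    have hcast : ((2:ℝ≥0∞)^j)⁻¹ = ENNReal.ofReal (((2:ℝ)^j))⁻¹ := by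
      rw [ENNReal.ofReal_inv_of_pos (by positivity), ENNReal.ofReal_pow (by norm_num)]
      norm_num
    rw [hcast]
    apply ENNReal.ofReal_le_ofReal
    -- real inequality : (2^j)⁻¹ ≤ 2 * exp(-(log 2 / m) t)
    have hfloor : ⌊t⌋₊ < (j+1) * m := by
      rw [hjdef]
      have h6 := Nat.mod_lt ⌊t⌋₊ hm0
      calc ⌊t⌋₊ = m * (⌊t⌋₊ / m) + ⌊t⌋₊ % m := (Nat.div_add_mod _ _).symm
        _ < m * (⌊t⌋₊ / m) + m := Nat.add_lt_add_left h6 _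
        _ = (⌊t⌋₊ / m + 1) * m := by ring
    have htle : t < ((j+1) * m : ℕ) := by
      have h5 : t < (⌊t⌋₊ + 1 : ℝ) := Nat.lt_floor_add_one t
      have h6 : (⌊t⌋₊ + 1 : ℕ) ≤ (j+1)*m := hfloor
      calc t < ((⌊t⌋₊ : ℝ) + 1) := h5
        _ ≤ (((j+1)*m : ℕ) : ℝ) := by exact_mod_cast h6
    have hlog := Real.log_pos (by norm_num : (1:ℝ) < 2)
    have hαt : (Real.log 2 / m) * t ≤ ((j:ℝ)+1) * Real.log 2 := by
      rw [div_mul_eq_mul_div, div_le_iff₀ hm0']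
      have h7 : t ≤ ((j:ℝ)+1) * m := by
        have := htle
        push_cast at this
        nlinarith
      nlinarith
    have hexp : Real.exp ((Real.log 2 / m) * t) ≤ 2^(j+1) := by
      calc Real.exp ((Real.log 2 / m) * t)
          ≤ Real.exp (((j:ℝ)+1) * Real.log 2) := Real.exp_le_exp.mpr hαt
        _ = (2:ℝ)^(j+1) := by
            rw [show ((j:ℝ)+1) = ((j+1 : ℕ) : ℝ) by push_cast; ring,
              Real.exp_nat_mul, Real.exp_log (by norm_num)]
    have hepos := Real.exp_pos ((Real.log 2 / m) * t)
    have hneg : Real.exp (-(Real.log 2 / m) * t)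
        = (Real.exp ((Real.log 2 / m) * t))⁻¹ := by
      rw [← Real.exp_neg]; ring_nf
    rw [hneg]
    have h7 : ((2:ℝ)^(j+1))⁻¹ ≤ (Real.exp ((Real.log 2 / m) * t))⁻¹ :=
      inv_anti₀ hepos hexp
    calc ((2:ℝ)^j)⁻¹ = 2 * ((2:ℝ)^(j+1))⁻¹ := by
          rw [pow_succ]
          field_simp
      _ ≤ 2 * (Real.exp ((Real.log 2 / m) * t))⁻¹ := by linarith
  calc volume {x ∈ Q | ENNReal.ofReal t <
          ∑' Q' : {Q' // Q' ∈ 𝒮 ∧ Q' ⊆ Q},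
            (Q' : Set (Fin n → ℝ)).indicator (fun _ => (1 : ℝ≥0∞)) x}
      ≤ volume (U k) := measure_mono hincl
    _ ≤ volume (U (1 + j*m)) := measure_mono h2
    _ ≤ volume Q / 2^j := h3
    _ ≤ _ := h4

end
end
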